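/- arXiv:1509.02101 — 9 statements merged into one kernel-verified Lean document; each statement's English description precedes it below -/
import Mathlib

section
/- Let A be a commutative ring, I an ideal of A, and assume A is complete and separated with respect to the I-adic topology. Let d ≥ 0, let ω ∈ A be a unit, and let α ∈ A[[x]] be a formal power series such that α ≡ ω·x^d modulo the ideal of A[[x]] generated by x^{d+1} together with (the image of) I. Then the quotient ring A[[x]]/(α) is a free A-module with basis the images of 1, x, x², …, x^{d−1}. -/
open PowerSeries

namespace WPAux

variable {A : Type*} [CommRing A]

/-- The shift-by-`d` operator on power series: drop the first `d` coefficients. -/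
noncomputable def sh (d : ℕ) (f : PowerSeries A) : PowerSeries A :=
  PowerSeries.mk fun n => coeff (n + d) f

@[simp] lemma coeff_sh (d n : ℕ) (f : PowerSeries A) :
    coeff n (sh d f) = coeff (n + d) f := coeff_mk _ _

lemma sh_sub (d : ℕ) (f g : PowerSeries A) : sh d (f - g) = sh d f - sh d g := by
  ext n; simp

@[simp] lemma sh_zero (d : ℕ) : sh d (0 : PowerSeries A) = 0 := by
  ext n; simp

lemma sh_add (d : ℕ) (f g : PowerSeries A) : sh d (f + g) = sh d f + sh d g := by
  ext n; simp

lemma sh_X_pow_mul (d : ℕ) (f : PowerSeries A) : sh d ((X : PowerSeries A) ^ d * f) = f := by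
  ext n
  rw [coeff_sh, coeff_X_pow_mul]

lemma smul_top_pow (I : Ideal A) (k : ℕ) : (I ^ k • ⊤ : Submodule A A) = I ^ k := by
  simp [smul_eq_mul, Ideal.mul_top]

lemma coeff_mul_mem (I : Ideal A) {k : ℕ} {g h : PowerSeries A}
    (hg : ∀ n, coeff n g ∈ I ^ k) (hh : ∀ n, coeff n h ∈ I) (n : ℕ) :
    coeff n (g * h) ∈ I ^ (k + 1) := by
  rw [coeff_mul, pow_succ]
  exact Ideal.sum_mem _ fun p _ => Ideal.mul_mem_mul (hg p.1) (hh p.2)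

lemma coeff_polysum_self {d : ℕ} (a : Fin d → A) (i : Fin d) :
    coeff (i : ℕ) (∑ j : Fin d, a j • (X : PowerSeries A) ^ (j : ℕ)) = a i := by
  rw [map_sum, Finset.sum_eq_single i]
  · simp [coeff_smul, coeff_X_pow]
  · intro j _ hj
    have hne : (i : ℕ) ≠ (j : ℕ) := fun hc => hj (Fin.ext hc.symm)
    simp [coeff_smul, coeff_X_pow, hne]
  · simp

lemma coeff_polysum_ge {d : ℕ} (a : Fin d → A) {n : ℕ} (hn : d ≤ n) :
    coeff n (∑ j : Fin d, a j • (X : PowerSeries A) ^ (j : ℕ)) = 0 := by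
  rw [map_sum]
  refine Finset.sum_eq_zero fun j _ => ?_
  have hne : n ≠ (j : ℕ) := by have := j.isLt; omega
  simp [coeff_smul, coeff_X_pow, hne]

lemma sh_polysum {d : ℕ} (a : Fin d → A) :
    sh d (∑ j : Fin d, a j • (X : PowerSeries A) ^ (j : ℕ)) = 0 := by
  ext n
  rw [coeff_sh, coeff_polysum_ge a (by omega), map_zero]

lemma eq_polysum {d : ℕ} (r : PowerSeries A) (hr : sh d r = 0) :
    r = ∑ i : Fin d, coeff (i : ℕ) r • (X : PowerSeries A) ^ (i : ℕ) := by
  ext n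
  by_cases hn : n < d
  · exact (coeff_polysum_self (fun i : Fin d => coeff (i : ℕ) r) ⟨n, hn⟩).symm
  · push_neg at hn
    rw [coeff_polysum_ge _ hn]
    have h1 : coeff n r = coeff (n - d) (sh d r) := by
      rw [coeff_sh, Nat.sub_add_cancel hn]
    rw [h1, hr, map_zero]

lemma coeff_mem_of_mem_map {I : Ideal A} {m : PowerSeries A}
    (hm : m ∈ Ideal.map (C (R := A)) I) (n : ℕ) : coeff n m ∈ I := by
  let K : Ideal (PowerSeries A) :=
    { carrier := {f | ∀ n, coeff n f ∈ I}
      add_mem' := fun hf hg n => by rw [map_add]; exact add_mem (hf n) (hg n)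
      zero_mem' := fun n => by rw [map_zero]; exact zero_mem I
      smul_mem' := fun r f hf n => by
        rw [smul_eq_mul, coeff_mul]
        exact Ideal.sum_mem _ fun p _ => I.mul_mem_left _ (hf p.2) }
  have hK : Ideal.map (C (R := A)) I ≤ K := by
    rw [Ideal.map_le_iff_le_comap]
    intro a ha
    intro n
    rw [coeff_C]
    split_ifs
    · exact ha
    · exact zero_mem I
  exact hK hm n

lemma exists_div (I : Ideal A) [IsAdicComplete I A] (d : ℕ) {h : PowerSeries A}
    (hh : ∀ n, coeff n h ∈ I) (f : PowerSeries A) :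
    ∃ q : PowerSeries A, sh d (f - q * ((X : PowerSeries A) ^ d + h)) = 0 := by
  set T : PowerSeries A → PowerSeries A := fun q => sh d f - sh d (q * h) with hT
  have hTdef : ∀ x, T x = sh d f - sh d (x * h) := fun x => rfl
  have hTsub : ∀ x y, T x - T y = sh d ((y - x) * h) := by
    intro x y
    rw [hTdef, hTdef, sub_mul, sh_sub]
    ring
  set Q : ℕ → PowerSeries A := fun k => Nat.rec 0 (fun _ q => T q) k with hQ
  have hQs : ∀ k, Q (k + 1) = T (Q k) := fun k => rfl
  have claim1 : ∀ k n, coeff n (Q (k + 1) - Q k) ∈ I ^ k := by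
    intro k
    induction k with
    | zero => intro n; simp [pow_zero, Ideal.one_eq_top]
    | succ k ih =>
      intro n
      have e0 : Q (k + 2) - Q (k + 1) = T (Q (k + 1)) - T (Q k) := by
        rw [← hQs k, ← hQs (k + 1)]
      have e1 : Q (k + 2) - Q (k + 1) = sh d ((Q k - Q (k + 1)) * h) :=
        e0.trans (hTsub (Q (k + 1)) (Q k))
      rw [e1, coeff_sh]
      refine coeff_mul_mem I (fun m => ?_) hh (n + d)
      have e2 : Q k - Q (k + 1) = -(Q (k + 1) - Q k) := by ring
      rw [e2, map_neg]
      exact neg_mem (ih m)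
  have claim2 : ∀ m n, m ≤ n → ∀ j, coeff j (Q n - Q m) ∈ I ^ m := by
    intro m n hmn
    induction n, hmn using Nat.le_induction with
    | base => simp
    | succ n hmn ih =>
      intro j
      have e1 : Q (n + 1) - Q m = (Q (n + 1) - Q n) + (Q n - Q m) := by ring
      rw [e1, map_add]
      exact add_mem (Ideal.pow_le_pow_right hmn (claim1 n j)) (ih j)
  have cau : ∀ j : ℕ, ∃ L : A, ∀ k, coeff j (Q k) ≡ L [SMOD (I ^ k • ⊤ : Submodule A A)] := by
    intro j
    apply IsPrecomplete.prec (IsAdicComplete.toIsPrecomplete)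
    intro m n hmn
    rw [SModEq.sub_mem, smul_top_pow]
    have h2 := claim2 m n hmn j
    rw [map_sub] at h2
    simpa using neg_mem h2
  choose L hL using cau
  set q : PowerSeries A := PowerSeries.mk L with hq
  have claim3 : ∀ k n, coeff n (q - Q k) ∈ I ^ k := by
    intro k n
    have h3 := hL n k
    rw [SModEq.sub_mem, smul_top_pow] at h3
    have e1 : coeff n (q - Q k) = -(coeff n (Q k) - L n) := by
      rw [map_sub, hq, coeff_mk]; ring
    rw [e1]
    exact neg_mem h3
  have fixed : q = T q := by
    have key : ∀ n k, coeff n (q - T q) ∈ I ^ k := by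
      intro n k
      have e3 : Q (k + 1) - T q = sh d ((q - Q k) * h) := by
        rw [hQs k]
        exact hTsub (Q k) q
      have hdec : q - T q = (q - Q (k + 1)) + (Q (k + 1) - T q) := by ring
      rw [e3] at hdec
      rw [hdec, map_add]
      refine add_mem (Ideal.pow_le_pow_right (Nat.le_succ k) (claim3 (k + 1) n)) ?_
      rw [coeff_sh]
      exact Ideal.pow_le_pow_right (Nat.le_succ k) (coeff_mul_mem I (claim3 k) hh (n + d))
    have hz : q - T q = 0 := by
      ext n
      rw [map_zero]
      refine IsHausdorff.haus (inferInstance : IsHausdorff I A) _ fun k => ?_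
      rw [SModEq.zero, smul_top_pow]
      exact key n k
    exact (sub_eq_zero.mp hz)
  refine ⟨q, ?_⟩
  have expand : f - q * ((X : PowerSeries A) ^ d + h) = (f - (X : PowerSeries A) ^ d * q) - q * h := by
    ring
  rw [expand, sh_sub, sh_sub, sh_X_pow_mul]
  have e2 : sh d f - q - sh d (q * h) = T q - q := by
    rw [hTdef]; ring
  rw [e2, sub_eq_zero]
  exact fixed.symm

lemma unique_div (I : Ideal A) [IsAdicComplete I A] (d : ℕ) {h : PowerSeries A}
    (hh : ∀ n, coeff n h ∈ I) (q : PowerSeries A) (a : Fin d → A)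
    (heq : q * ((X : PowerSeries A) ^ d + h) + (∑ i : Fin d, a i • (X : PowerSeries A) ^ (i : ℕ)) = 0) :
    q = 0 ∧ ∀ i, a i = 0 := by
  have hsh : q = -sh d (q * h) := by
    have h1 : sh d (q * ((X : PowerSeries A) ^ d + h) + ∑ i : Fin d, a i • (X : PowerSeries A) ^ (i : ℕ)) = 0 := by
      rw [heq, sh_zero]
    have e1 : q * ((X : PowerSeries A) ^ d + h) + ∑ i : Fin d, a i • (X : PowerSeries A) ^ (i : ℕ)
        = ((X : PowerSeries A) ^ d * q + q * h) + ∑ i : Fin d, a i • (X : PowerSeries A) ^ (i : ℕ) := by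
      ring
    rw [e1, sh_add, sh_add, sh_X_pow_mul, sh_polysum, add_zero] at h1
    exact eq_neg_of_add_eq_zero_left h1
  have hpow : ∀ k n, coeff n q ∈ I ^ k := by
    intro k
    induction k with
    | zero => intro n; simp [pow_zero, Ideal.one_eq_top]
    | succ k ih =>
      intro n
      have e1 : coeff n q = -(coeff (n + d) (q * h)) := by
        conv_lhs => rw [hsh]
        rw [map_neg, coeff_sh]
      rw [e1]
      exact neg_mem (coeff_mul_mem I ih hh (n + d))
  have hq0 : q = 0 := by
    ext n
    rw [map_zero]
    refine IsHausdorff.haus (inferInstance : IsHausdorff I A) _ fun k => ?_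
    rw [SModEq.zero, smul_top_pow]
    exact hpow k n
  have hpol : (∑ i : Fin d, a i • (X : PowerSeries A) ^ (i : ℕ)) = 0 := by
    rw [hq0, zero_mul, zero_add] at heq
    exact heq
  refine ⟨hq0, fun i => ?_⟩
  have := congrArg (coeff (i : ℕ)) hpol
  rw [coeff_polysum_self, map_zero] at this
  exact this

/-- The linear map sending coefficients to the corresponding polynomial of degree `< d`. -/
noncomputable def polyMap (d : ℕ) : (Fin d → A) →ₗ[A] PowerSeries A where
  toFun a := ∑ i : Fin d, a i • (X : PowerSeries A) ^ (i : ℕ)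
  map_add' a b := by simp [add_smul, Finset.sum_add_distrib]
  map_smul' r a := by simp [smul_smul, Finset.smul_sum]

@[simp] lemma polyMap_apply (d : ℕ) (a : Fin d → A) :
    polyMap d a = ∑ i : Fin d, a i • (X : PowerSeries A) ^ (i : ℕ) := rfl

lemma polyMap_single (d : ℕ) (i : Fin d) :
    polyMap d (Pi.single i (1 : A)) = (X : PowerSeries A) ^ (i : ℕ) := by
  classical
  rw [polyMap_apply, Finset.sum_eq_single i]
  · simp
  · intro j _ hj
    rw [Pi.single_eq_of_ne hj, zero_smul]
  · simp

end WPAux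

open WPAux

/-- Weierstrass preparation (Hopkins–Kuhn–Ravenel form): if `A` is complete and
separated in the `I`-adic topology, `ω` is a unit and
`α ≡ ω·x^d mod (x^{d+1}, I)`, then `A[[x]]/(α)` is a free `A`-module with basis
the images of `1, x, …, x^{d-1}`. -/
theorem weierstrass_preparation_quotient_free
    {A : Type*} [CommRing A] (I : Ideal A) [IsAdicComplete I A]
    (d : ℕ) (ω : A) (hω : IsUnit ω) (α : PowerSeries A)
    (hα : α - PowerSeries.C ω * PowerSeries.X ^ d ∈
      Ideal.span {(PowerSeries.X : PowerSeries A) ^ (d + 1)} ⊔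
        Ideal.map (PowerSeries.C (R := A)) I) :
    ∃ b : Module.Basis (Fin d) A (PowerSeries A ⧸ Ideal.span {α}),
      ∀ i : Fin d, b i = Ideal.Quotient.mk (Ideal.span {α}) (PowerSeries.X ^ (i : ℕ)) := by
  classical
  obtain ⟨p, hp, m, hm, hpm⟩ := Submodule.mem_sup.mp hα
  obtain ⟨g, hg⟩ := Ideal.mem_span_singleton'.mp hp
  set u : PowerSeries A := PowerSeries.C ω + X * g with hu
  have hu_unit : IsUnit u := by
    have hcc : constantCoeff u = ω := by simp [hu]
    rw [PowerSeries.isUnit_iff_constantCoeff, hcc]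
    exact hω
  set v : PowerSeries A := ↑hu_unit.unit⁻¹ with hv
  have huv : u * v = 1 := by
    have := hu_unit.unit.mul_inv
    rwa [hu_unit.unit_spec] at this
  have hαdecomp : α = X ^ d * u + m := by
    have h1 : α = PowerSeries.C ω * X ^ d + (g * X ^ (d + 1) + m) := by
      rw [hg, hpm]
      ring
    rw [h1, hu]
    ring
  set h : PowerSeries A := m * v with hhdef
  have hβ : α * v = X ^ d + h := by
    rw [hαdecomp, add_mul, mul_assoc, huv, mul_one, hhdef]
  have hspan : Ideal.span {(X : PowerSeries A) ^ d + h} = Ideal.span {α} := by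
    rw [← hβ, mul_comm]
    exact Ideal.span_singleton_mul_left_unit (hu_unit.unit⁻¹).isUnit α
  have hh : ∀ n, coeff n h ∈ I :=
    fun n => coeff_mem_of_mem_map (Ideal.mul_mem_right v _ hm) n
  set J : Ideal (PowerSeries A) := Ideal.span {α} with hJ
  let φ : (Fin d → A) →ₗ[A] (PowerSeries A ⧸ J) :=
    (Ideal.Quotient.mkₐ A J).toLinearMap.comp (polyMap d)
  have hφ : ∀ a, φ a = Ideal.Quotient.mk J (polyMap d a) := fun a => rfl
  have hinj : Function.Injective φ := by
    rw [injective_iff_map_eq_zero]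
    intro a ha
    rw [hφ, Ideal.Quotient.eq_zero_iff_mem, ← hspan, Ideal.mem_span_singleton'] at ha
    obtain ⟨c, hc⟩ := ha
    have heq : (-c) * ((X : PowerSeries A) ^ d + h)
        + (∑ i : Fin d, a i • (X : PowerSeries A) ^ (i : ℕ)) = 0 := by
      rw [← polyMap_apply, ← hc]
      ring
    exact funext (unique_div I d hh (-c) a heq).2
  have hsurj : Function.Surjective φ := by
    intro y
    obtain ⟨f, rfl⟩ := Ideal.Quotient.mk_surjective y
    obtain ⟨q, hq⟩ := exists_div I d hh f
    set r : PowerSeries A := f - q * ((X : PowerSeries A) ^ d + h) with hr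
    refine ⟨fun i => coeff (i : ℕ) r, ?_⟩
    rw [hφ]
    have h1 : polyMap d (fun i => coeff (i : ℕ) r) = r := by
      rw [polyMap_apply]
      exact (eq_polysum r hq).symm
    rw [h1, Ideal.Quotient.eq]
    have h2 : r - f = (-q) * ((X : PowerSeries A) ^ d + h) := by
      rw [hr]; ring
    rw [h2]
    have hmem : -q * ((X : PowerSeries A) ^ d + h) ∈ Ideal.span {(X : PowerSeries A) ^ d + h} :=
      Ideal.mem_span_singleton'.mpr ⟨-q, rfl⟩
    exact hspan ▸ hmem
  let e : (Fin d → A) ≃ₗ[A] (PowerSeries A ⧸ J) := LinearEquiv.ofBijective φ ⟨hinj, hsurj⟩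
  refine ⟨(Pi.basisFun A (Fin d)).map e, fun i => ?_⟩
  rw [Module.Basis.map_apply, Pi.basisFun_apply]
  show φ (Pi.single i 1) = _
  rw [hφ, polyMap_single]
end

section
/- Let R be a commutative ring, n ≥ 0, and let r₀, r₁, …, r_n ∈ R be elements such that for each 0 ≤ k ≤ n the image of r_k in R/(r₀,…,r_{k−1}) is a nonzerodivisor (for k = 0 this means r₀ is a nonzerodivisor in R). Let M be an R-module. Then Tor₁^R(R/(r₀,…,r_k), M) = 0 for every 0 ≤ k ≤ n if and only if for every 0 ≤ k ≤ n multiplication by r_k is injective on the quotient module M/(r₀,…,r_{k−1})M (for k = 0 this means multiplication by r₀ is injective on M). -/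
open CategoryTheory

open CategoryTheory.Limits CategoryTheory.MonoidalCategory TensorProduct

universe u

namespace TorVanishingAux

section Helpers

lemma mono_iff_of_square {C : Type*} [Category C] {A B A' B' : C}
    (f : A ⟶ B) (g : A' ⟶ B') (e : A ≅ A') (e' : B ≅ B')
    (h : f ≫ e'.hom = e.hom ≫ g) : Mono f ↔ Mono g := by
  constructor
  · intro hf
    have hg : g = e.inv ≫ f ≫ e'.hom := by rw [h, Iso.inv_hom_id_assoc]
    rw [hg]; infer_instance
  · intro hg
    have hf : f = e.hom ≫ g ≫ e'.inv := by
      rw [← Category.assoc, ← h, Category.assoc, Iso.hom_inv_id, Category.comp_id]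
    rw [hf]; infer_instance

lemma subsingleton_of_isZero {R : Type u} [CommRing R] {X : ModuleCat.{u} R}
    (h : IsZero X) : Subsingleton X := by
  have h0 : (𝟙 X : X ⟶ X) = 0 := h.eq_of_src _ _
  refine ⟨fun a b => ?_⟩
  have ha : a = (0 : X ⟶ X) a := by rw [← h0]; rfl
  have hb : b = (0 : X ⟶ X) b := by rw [← h0]; rfl
  have hz : ∀ x : X, (0 : X ⟶ X) x = 0 := fun _ => rfl
  rw [ha, hb, hz a, hz b]

end Helpers

noncomputable section

variable {R : Type u} [CommRing R]

instance tensoringLeftPreserves (X : ModuleCat.{u} R) :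
    PreservesColimits ((tensoringLeft (ModuleCat.{u} R)).obj X) :=
  inferInstanceAs (PreservesColimits (MonoidalCategory.tensorLeft X))

variable (M : ModuleCat.{u} R) (P : ProjectiveResolution M)

/-- The functor `X ⊗ -`. -/
abbrev F (X : ModuleCat.{u} R) : ModuleCat.{u} R ⥤ ModuleCat.{u} R :=
  (tensoringLeft (ModuleCat.{u} R)).obj X

/-- The tensored complex `X ⊗ P•`. -/
abbrev TC (X : ModuleCat.{u} R) : ChainComplex (ModuleCat.{u} R) ℕ :=
  ((F X).mapHomologicalComplex (ComplexShape.down ℕ)).obj P.complex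

/-- The chain map `X ⊗ P• ⟶ Y ⊗ P•` induced by `g : X ⟶ Y`. -/
abbrev TCmap {X Y : ModuleCat.{u} R} (g : X ⟶ Y) : TC M P X ⟶ TC M P Y :=
  (NatTrans.mapHomologicalComplex ((tensoringLeft (ModuleCat.{u} R)).map g)
    (ComplexShape.down ℕ)).app P.complex

instance flatX (i : ℕ) : Module.Flat R (P.complex.X i) := by
  have : Module.Projective R (P.complex.X i) :=
    by haveI := P.projective i; infer_instance
  infer_instance

lemma TCmap_comp_zero (S : ShortComplex (ModuleCat.{u} R)) :
    TCmap M P S.f ≫ TCmap M P S.g = 0 := by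
  apply HomologicalComplex.hom_ext
  intro i
  show ModuleCat.ofHom ((LinearMap.rTensor (P.complex.X i) S.g.hom).comp (LinearMap.rTensor (P.complex.X i) S.f.hom)) = 0
  rw [← LinearMap.rTensor_comp]
  show ModuleCat.ofHom (LinearMap.rTensor (P.complex.X i) (S.f ≫ S.g).hom) = 0
  rw [S.zero]
  exact congrArg ModuleCat.ofHom (LinearMap.rTensor_zero _)

lemma shortExact_TC (S : ShortComplex (ModuleCat.{u} R)) (hS : S.ShortExact) :
    (ShortComplex.mk (TCmap M P S.f) (TCmap M P S.g)
      (TCmap_comp_zero M P S)).ShortExact := by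
  apply HomologicalComplex.shortExact_of_degreewise_shortExact
  intro i
  have hexact : Function.Exact S.f S.g :=
    (ShortComplex.ShortExact.moduleCat_exact_iff_function_exact S).1 hS.exact
  refine ShortComplex.ShortExact.mk ?_ (mono_f := ?_) (epi_g := ?_)
  · rw [ShortComplex.ShortExact.moduleCat_exact_iff_function_exact]
    exact rTensor_exact (P.complex.X i) hexact hS.moduleCat_surjective_g
  · rw [ModuleCat.mono_iff_injective]
    exact Module.Flat.rTensor_preserves_injective_linearMap S.f.hom hS.moduleCat_injective_f
  · rw [ModuleCat.epi_iff_surjective]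
    exact LinearMap.rTensor_surjective (P.complex.X i) hS.moduleCat_surjective_g

lemma isZero_H1_of_flat (X : ModuleCat.{u} R) [Module.Flat R X] :
    IsZero ((TC M P X).homology 1) := by
  rw [← HomologicalComplex.exactAt_iff_isZero_homology]
  rw [HomologicalComplex.exactAt_iff' _ 2 1 0 (by simp only [ChainComplex.prev]; rfl) (by simp)]
  have hP : Function.Exact (P.complex.d 2 1) (P.complex.d 1 0) :=
    (ShortComplex.ShortExact.moduleCat_exact_iff_function_exact _).1 (P.exact_succ 0)
  rw [ShortComplex.ShortExact.moduleCat_exact_iff_function_exact]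
  exact Module.Flat.lTensor_exact X hP

/-- Identification of `H₀(X ⊗ P•)` with `X ⊗ M`. -/
def H0iso (X : ModuleCat.{u} R) : (TC M P X).homology 0 ≅ (F X).obj M :=
  (TC M P X).isoHomologyι₀ ≪≫ asIso (P.fromLeftDerivedZero' (F X))

lemma opcycles_naturality {X Y : ModuleCat.{u} R} (g : X ⟶ Y) :
    HomologicalComplex.opcyclesMap (TCmap M P g) 0 ≫ P.fromLeftDerivedZero' (F Y) =
      P.fromLeftDerivedZero' (F X) ≫ MonoidalCategory.whiskerRight g M := by
  rw [← cancel_epi ((TC M P X).pOpcycles 0),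
    HomologicalComplex.p_opcyclesMap_assoc,
    ProjectiveResolution.pOpcycles_comp_fromLeftDerivedZero',
    ProjectiveResolution.pOpcycles_comp_fromLeftDerivedZero'_assoc]
  exact (whisker_exchange g (P.π.f 0)).symm

lemma H0iso_naturality {X Y : ModuleCat.{u} R} (g : X ⟶ Y) :
    HomologicalComplex.homologyMap (TCmap M P g) 0 ≫ (H0iso M P Y).hom =
      (H0iso M P X).hom ≫ MonoidalCategory.whiskerRight g M := by
  dsimp only [H0iso, Iso.trans_hom, asIso_hom]
  rw [HomologicalComplex.isoHomologyι_hom, HomologicalComplex.isoHomologyι_hom,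
    HomologicalComplex.homologyι_naturality_assoc, Category.assoc,
    opcycles_naturality]

/-- Identification of `Tor₁(X, M)` with `H₁(X ⊗ P•)`. -/
def Tor1Iso (X : ModuleCat.{u} R) :
    ((Tor (ModuleCat.{u} R) 1).obj X).obj M ≅ (TC M P X).homology 1 :=
  P.isoLeftDerivedObj (F X) 1

end


noncomputable section

variable {R : Type u} [CommRing R]

/-- Multiplication by `a` on `R ⧸ I` as an `R`-linear map. -/
def mulHom (I : Ideal R) (a : R) : (R ⧸ I) →ₗ[R] (R ⧸ I) := a • LinearMap.id

lemma mulHom_apply (I : Ideal R) (a x : R) :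
    mulHom I a (Ideal.Quotient.mk I x) = Ideal.Quotient.mk I (a * x) := by
  show a • (Ideal.Quotient.mk I x) = Ideal.Quotient.mk I (a * x)
  exact (Submodule.Quotient.mk_smul I a x).symm

lemma mulHom_injective (I : Ideal R) (a : R)
    (ha : Ideal.Quotient.mk I a ∈ nonZeroDivisors (R ⧸ I)) :
    Function.Injective (mulHom I a) := by
  rw [← LinearMap.ker_eq_bot, LinearMap.ker_eq_bot']
  intro u hu
  obtain ⟨x, rfl⟩ := Ideal.Quotient.mk_surjective u
  rw [mulHom_apply] at hu
  have : Ideal.Quotient.mk I x * Ideal.Quotient.mk I a = 0 := by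
    rw [← map_mul, mul_comm]; exact hu
  exact ha.2 _ this

/-- The projection `R ⧸ I → R ⧸ J` for `I ≤ J`. -/
def factorHom (I J : Ideal R) (h : I ≤ J) : (R ⧸ I) →ₗ[R] (R ⧸ J) :=
  Submodule.mapQ I J LinearMap.id (by rwa [Submodule.comap_id])

lemma factorHom_apply (I J : Ideal R) (h : I ≤ J) (x : R) :
    factorHom I J h (Ideal.Quotient.mk I x) = Ideal.Quotient.mk J x := by
  show Submodule.mapQ I J LinearMap.id _ (Submodule.Quotient.mk x) = _
  rw [Submodule.mapQ_apply]
  rfl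

lemma shortExact_quot (I : Ideal R) (a : R) (J : Ideal R) (hle : I ≤ J)
    (hJ : J = I ⊔ Ideal.span {a})
    (ha : Ideal.Quotient.mk I a ∈ nonZeroDivisors (R ⧸ I)) :
    (ShortComplex.mk
      (X₁ := ModuleCat.of R (R ⧸ I)) (X₂ := ModuleCat.of R (R ⧸ I))
      (X₃ := ModuleCat.of R (R ⧸ J))
      (ModuleCat.ofHom (mulHom I a)) (ModuleCat.ofHom (factorHom I J hle))
      (by
        refine ModuleCat.hom_ext (LinearMap.ext fun u => ?_)
        obtain ⟨x, rfl⟩ := Ideal.Quotient.mk_surjective u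
        show factorHom I J hle (mulHom I a (Ideal.Quotient.mk I x)) = 0
        rw [mulHom_apply, factorHom_apply, Ideal.Quotient.eq_zero_iff_mem, hJ]
        exact Submodule.mem_sup_right
          (Ideal.mul_mem_right x _ (Ideal.subset_span (Set.mem_singleton a))))).ShortExact := by
  have hle : I ≤ J := hJ ▸ le_sup_left
  refine ShortComplex.ShortExact.mk ?_ (mono_f := ?_) (epi_g := ?_)
  · rw [ShortComplex.ShortExact.moduleCat_exact_iff_function_exact]
    intro u
    obtain ⟨x, rfl⟩ := Ideal.Quotient.mk_surjective u
    show factorHom I J hle (Ideal.Quotient.mk I x) = 0 ↔ _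
    rw [factorHom_apply, Ideal.Quotient.eq_zero_iff_mem]
    constructor
    · intro hx
      rw [hJ, Submodule.mem_sup] at hx
      obtain ⟨i, hi, s, hs, rfl⟩ := hx
      obtain ⟨c, rfl⟩ := Ideal.mem_span_singleton'.1 hs
      refine ⟨Ideal.Quotient.mk I c, ?_⟩
      show mulHom I a _ = _
      rw [mulHom_apply, Ideal.Quotient.eq]
      have : a * c - (i + c * a) = -i := by ring
      rw [this]
      exact I.neg_mem hi
    · rintro ⟨u', hu⟩
      obtain ⟨c, rfl⟩ := Ideal.Quotient.mk_surjective u'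
      replace hu : mulHom I a (Ideal.Quotient.mk I c) = Ideal.Quotient.mk I x := hu
      rw [mulHom_apply, Ideal.Quotient.eq] at hu
      have hx : x = (x - a * c) + a * c := by ring
      rw [hx, hJ]
      exact Submodule.add_mem _
        (Submodule.mem_sup_left (by simpa using I.neg_mem hu))
        (Submodule.mem_sup_right (Ideal.mul_mem_right c _
          (Ideal.subset_span (Set.mem_singleton a))))
  · rw [ModuleCat.mono_iff_injective]
    exact mulHom_injective I a ha
  · rw [ModuleCat.epi_iff_surjective]
    intro y
    obtain ⟨x, rfl⟩ := Ideal.Quotient.mk_surjective y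
    exact ⟨Ideal.Quotient.mk I x, factorHom_apply I J hle x⟩

lemma injective_rTensor_iff (I : Ideal R) (a : R) (M : Type u)
    [AddCommGroup M] [Module R M] :
    Function.Injective (LinearMap.rTensor M (mulHom I a)) ↔
      Function.Injective (fun m : M ⧸ (I • ⊤ : Submodule R M) => a • m) := by
  have h1 : LinearMap.rTensor M (mulHom I a)
      = (a • LinearMap.id : (R ⧸ I) ⊗[R] M →ₗ[R] (R ⧸ I) ⊗[R] M) := by
    apply TensorProduct.ext'
    intro x y
    show (mulHom I a x) ⊗ₜ[R] y = a • (x ⊗ₜ[R] y)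
    rw [smul_tmul']
    rfl
  set e := TensorProduct.quotTensorEquivQuotSMul M I with he
  have h2 : (fun m : M ⧸ (I • ⊤ : Submodule R M) => a • m)
      = e ∘ (fun t => a • t) ∘ e.symm := by
    funext m
    simp only [Function.comp_apply, map_smul, LinearEquiv.apply_symm_apply]
  rw [h1, h2, EquivLike.comp_injective, EquivLike.injective_comp]
  show Function.Injective (fun t : (R ⧸ I) ⊗[R] M => a • t) ↔ _
  rfl

end

end TorVanishingAux


open TorVanishingAux in
/-- For a sequence `r₀, …, r_n` regular on `R`, the groups
`Tor₁^R(R/(r₀,…,r_k), M)` vanish for all `0 ≤ k ≤ n` if and only if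
multiplication by `r_k` is injective on `M/(r₀,…,r_{k−1})M` for all `0 ≤ k ≤ n`. -/
theorem tor_vanishing_iff_regular_on_module
    {R : Type u} [CommRing R] (n : ℕ) (r : ℕ → R)
    (hreg : ∀ k ≤ n, Ideal.Quotient.mk (Ideal.span (r '' Set.Iio k)) (r k) ∈
      nonZeroDivisors (R ⧸ Ideal.span (r '' Set.Iio k)))
    (M : Type u) [AddCommGroup M] [Module R M] :
    (∀ k ≤ n, Subsingleton (((Tor (ModuleCat.{u} R) 1).obj
        (ModuleCat.of R (R ⧸ Ideal.span (r '' Set.Iio (k + 1))))).obj (ModuleCat.of R M)))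
      ↔ (∀ k ≤ n, Function.Injective fun m :
          M ⧸ (Ideal.span (r '' Set.Iio k) • ⊤ : Submodule R M) => r k • m) := by
  classical
  let Mc : ModuleCat.{u} R := ModuleCat.of R M
  let P : ProjectiveResolution Mc := projectiveResolution Mc
  let I : ℕ → Ideal R := fun k => Ideal.span (r '' Set.Iio k)
  let quotObj : ℕ → ModuleCat.{u} R := fun k => ModuleCat.of R (R ⧸ I k)
  have hij : (ComplexShape.down ℕ).Rel 1 0 := by simp
  have hsup : ∀ k : ℕ, I (k + 1) = I k ⊔ Ideal.span {r k} := by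
    intro k
    have himg : r '' Set.Iio (k + 1) = insert (r k) (r '' Set.Iio k) := by
      rw [show Set.Iio (k + 1) = insert k (Set.Iio k) by
        ext j; simp only [Set.mem_Iio, Set.mem_insert_iff]; omega]
      rw [Set.image_insert_eq]
    show Ideal.span (r '' Set.Iio (k + 1)) = _
    rw [himg, Ideal.span_insert, sup_comm]
  have hle : ∀ k : ℕ, I k ≤ I (k + 1) := fun k => (hsup k) ▸ le_sup_left
  have monoBridge : ∀ k : ℕ,
      (Mono (HomologicalComplex.homologyMap
        (TCmap Mc P (X := quotObj k) (Y := quotObj k) (ModuleCat.ofHom (mulHom (I k) (r k)))) 0)) ↔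
      Function.Injective fun m : M ⧸ (I k • ⊤ : Submodule R M) => r k • m := by
    intro k
    rw [mono_iff_of_square _
      (MonoidalCategory.whiskerRight (f := (ModuleCat.ofHom (mulHom (I k) (r k)) : quotObj k ⟶ quotObj k)) Mc)
      (H0iso Mc P (quotObj k)) (H0iso Mc P (quotObj k)) (H0iso_naturality Mc P _),
      ModuleCat.mono_iff_injective]
    exact injective_rTensor_iff (I k) (r k) M
  have torIff : ∀ k : ℕ,
      Subsingleton (((Tor (ModuleCat.{u} R) 1).obj
        (ModuleCat.of R (R ⧸ Ideal.span (r '' Set.Iio (k + 1))))).obj (ModuleCat.of R M)) ↔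
      IsZero ((TC Mc P (quotObj (k + 1))).homology 1) := by
    intro k
    constructor
    · intro h
      exact (ModuleCat.isZero_of_subsingleton _).of_iso (Tor1Iso Mc P (quotObj (k + 1))).symm
    · intro h
      exact subsingleton_of_isZero (h.of_iso (Tor1Iso Mc P (quotObj (k + 1))))
  constructor
  · intro hT k hk
    have hses := shortExact_TC Mc P _
      (shortExact_quot (I k) (r k) (I (k + 1)) (hle k) (hsup k) (hreg k hk))
    have hz : IsZero ((TC Mc P (quotObj (k + 1))).homology 1) := (torIff k).1 (hT k hk)
    have hδ : hses.δ 1 0 hij = 0 := hz.eq_of_src _ _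
    have hmono := (ShortComplex.exact_iff_mono _ hδ).1 (hses.homology_exact₁ 1 0 hij)
    exact (monoBridge k).1 hmono
  · intro hR
    have zcl : ∀ k, k ≤ n + 1 → IsZero ((TC Mc P (quotObj k)).homology 1) := by
      intro k
      induction k with
      | zero =>
        intro _
        have h0 : I 0 = ⊥ := by
          show Ideal.span (r '' Set.Iio 0) = ⊥
          rw [show Set.Iio (0 : ℕ) = ∅ by ext j; simp, Set.image_empty, Ideal.span_empty]
        haveI : Module.Flat R ↑(ModuleCat.of R (R ⧸ I 0)) :=
          Module.Flat.of_linearEquiv (Submodule.quotEquivOfEqBot _ h0)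
        exact isZero_H1_of_flat Mc P (ModuleCat.of R (R ⧸ I 0))
      | succ k ih =>
        intro hk1
        have hk : k ≤ n := Nat.succ_le_succ_iff.mp hk1
        have hzk : IsZero ((TC Mc P (quotObj k)).homology 1) := ih (hk.trans (Nat.le_succ n))
        have hses := shortExact_TC Mc P _
          (shortExact_quot (I k) (r k) (I (k + 1)) (hle k) (hsup k) (hreg k hk))
        haveI hmono := (monoBridge k).2 (hR k hk)
        have hδ : hses.δ 1 0 hij = 0 :=
          zero_of_comp_mono _ (hses.δ_comp 1 0 hij)
        have hepi : Epi (HomologicalComplex.homologyMap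
            (TCmap Mc P (X := quotObj k) (Y := quotObj (k + 1))
              (ModuleCat.ofHom (factorHom (I k) (I (k + 1)) (hle k)))) 1) :=
          (ShortComplex.exact_iff_epi _ hδ).1 (hses.homology_exact₃ 1 0 hij)
        have hu0 : HomologicalComplex.homologyMap
            (TCmap Mc P (X := quotObj k) (Y := quotObj (k + 1))
              (ModuleCat.ofHom (factorHom (I k) (I (k + 1)) (hle k)))) 1 = 0 :=
          hzk.eq_of_src _ _
        rw [IsZero.iff_id_eq_zero,
          ← cancel_epi (HomologicalComplex.homologyMap
            (TCmap Mc P (X := quotObj k) (Y := quotObj (k + 1))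
              (ModuleCat.ofHom (factorHom (I k) (I (k + 1)) (hle k)))) 1),
          Category.comp_id, Limits.comp_zero]
        exact hu0
    intro k hk
    exact (torIff k).2 (zcl (k + 1) (Nat.succ_le_succ hk))
end

section
/- Let R be a commutative ring, k ≥ 1, and let r₀, …, r_k ∈ R be such that the image of r_k in R/(r₀,…,r_{k−1}) is a nonzerodivisor. Let M be an R-module. Then multiplication by r_k is injective on M/(r₀,…,r_{k−1})M if and only if the map Tor₁^R(R/(r₀,…,r_{k−1}), M) → Tor₁^R(R/(r₀,…,r_k), M) induced by the natural quotient homomorphism R/(r₀,…,r_{k−1}) → R/(r₀,…,r_k) is surjective. -/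
open CategoryTheory CategoryTheory.Limits CategoryTheory.MonoidalCategory HomologicalComplex

universe u

section Helpers

variable {R : Type u} [CommRing R]

private lemma smulInj_of_equiv {M₁ M₂ : Type*} [AddCommGroup M₁] [Module R M₁]
    [AddCommGroup M₂] [Module R M₂] (e : M₁ ≃ₗ[R] M₂) (c : R)
    (h : Function.Injective fun x : M₁ => c • x) :
    Function.Injective fun x : M₂ => c • x := by
  intro x y hxy
  simp only at hxy
  apply e.symm.injective.eq_iff.mp
  apply h
  simp only [← map_smul, hxy]

private lemma smulInj_congr {M₁ M₂ : Type*} [AddCommGroup M₁] [Module R M₁]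
    [AddCommGroup M₂] [Module R M₂] (e : M₁ ≃ₗ[R] M₂) (c : R) :
    (Function.Injective fun x : M₁ => c • x) ↔ (Function.Injective fun x : M₂ => c • x) :=
  ⟨smulInj_of_equiv e c, smulInj_of_equiv e.symm c⟩

private lemma surj_comp_iso_iff {X₁ X₂ Y₁ Y₂ : ModuleCat.{u} R} (e : X₁ ⟶ X₂) (h : X₂ ⟶ Y₁)
    (i : Y₁ ⟶ Y₂) [IsIso e] [IsIso i] :
    Function.Surjective ⇑(e ≫ h ≫ i) ↔ Function.Surjective ⇑h := by
  have hc : ⇑(e ≫ h ≫ i) = ⇑i ∘ ⇑h ∘ ⇑e := rfl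
  have he : Function.Bijective ⇑e := ConcreteCategory.bijective_of_isIso e
  have hi : Function.Bijective ⇑i := ConcreteCategory.bijective_of_isIso i
  rw [hc]
  constructor
  · intro hs y
    obtain ⟨x, hx⟩ := hs (i y)
    exact ⟨e x, hi.injective hx⟩
  · intro hs
    exact hi.surjective.comp (hs.comp he.surjective)

end Helpers

/-- Multiplication by `r_k` is injective on `M/(r₀,…,r_{k−1})M` if and only if the
map `Tor₁^R(R/(r₀,…,r_{k−1}), M) → Tor₁^R(R/(r₀,…,r_k), M)` induced by the natural
quotient homomorphism is surjective. -/
theorem mul_injective_iff_tor_map_surjective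
    {R : Type u} [CommRing R] (k : ℕ) (hk : 1 ≤ k) (r : ℕ → R)
    (hreg : Ideal.Quotient.mk (Ideal.span (r '' Set.Iio k)) (r k) ∈
      nonZeroDivisors (R ⧸ Ideal.span (r '' Set.Iio k)))
    (M : Type u) [AddCommGroup M] [Module R M] :
    (Function.Injective fun m :
        M ⧸ (Ideal.span (r '' Set.Iio k) • ⊤ : Submodule R M) => r k • m)
      ↔ Function.Surjective
        (((Tor (ModuleCat.{u} R) 1).map
          (ModuleCat.ofHom
            (Submodule.mapQ (Ideal.span (r '' Set.Iio k)) (Ideal.span (r '' Set.Iio (k + 1)))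
              LinearMap.id
              (by
                intro x hx
                exact Ideal.span_mono
                  (Set.image_mono (f := r) (Set.Iio_subset_Iio (Nat.le_succ k))) hx)))).app
          (ModuleCat.of R M)) := by
  classical
  set I : Ideal R := Ideal.span (r '' Set.Iio k) with hI
  set J : Ideal R := Ideal.span (r '' Set.Iio (k + 1)) with hJdef
  have hIJ : I ≤ J :=
    Ideal.span_mono (Set.image_mono (f := r) (Set.Iio_subset_Iio (Nat.le_succ k)))
  have hJ : J = Ideal.span {r k} ⊔ I := by
    have himg : r '' Set.Iio (k + 1) = insert (r k) (r '' Set.Iio k) := by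
      rw [show Set.Iio (k + 1) = insert k (Set.Iio k) by
        ext m; simp [Nat.lt_succ_iff_lt_or_eq, or_comm, Nat.le_iff_lt_or_eq, eq_comm],
        Set.image_insert_eq]
    rw [hJdef, himg, Ideal.span_insert]
  have hsmul : ∀ (L : Ideal R) (c a : R),
      c • Ideal.Quotient.mk L a = Ideal.Quotient.mk L (c * a) := fun L c a => by
    show c • (Submodule.Quotient.mk a : R ⧸ L) = Submodule.Quotient.mk (c * a)
    rw [← smul_eq_mul, Submodule.Quotient.mk_smul]
  -- notation
  set A : ModuleCat.{u} R := ModuleCat.of R (R ⧸ I) with hA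
  set B : ModuleCat.{u} R := ModuleCat.of R (R ⧸ J) with hB
  set Mc : ModuleCat.{u} R := ModuleCat.of R M with hMc
  set φ : A ⟶ B := ModuleCat.ofHom (Submodule.mapQ I J LinearMap.id hIJ) with hφ
  set μ : A ⟶ A := ModuleCat.ofHom (r k • LinearMap.id) with hμ
  have hμapp : ∀ a : R, μ (Ideal.Quotient.mk I a) = Ideal.Quotient.mk I (r k * a) :=
    fun a => hsmul I (r k) a
  have hφapp : ∀ a : R, φ (Ideal.Quotient.mk I a) = Ideal.Quotient.mk J a := fun _ => rfl
  -- the short exact sequence of modules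
  have hmuinj : Function.Injective ⇑μ := by
    intro x y h
    obtain ⟨a, rfl⟩ := Ideal.Quotient.mk_surjective x
    obtain ⟨b, rfl⟩ := Ideal.Quotient.mk_surjective y
    rw [hμapp, hμapp] at h
    have h' : (Ideal.Quotient.mk I a - Ideal.Quotient.mk I b) * Ideal.Quotient.mk I (r k)
        = 0 := by
      rw [sub_mul, sub_eq_zero, ← map_mul, ← map_mul, mul_comm a, mul_comm b]
      exact h
    have := (mem_nonZeroDivisors_iff_right.mp hreg) _ h'
    rwa [sub_eq_zero] at this
  have hrangeker : LinearMap.range μ.hom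
      = LinearMap.ker φ.hom := by
    ext x
    obtain ⟨a, rfl⟩ := Ideal.Quotient.mk_surjective x
    simp only [LinearMap.mem_range, LinearMap.mem_ker]
    erw [hφapp a]
    rw [Ideal.Quotient.eq_zero_iff_mem, hJ]
    constructor
    · rintro ⟨y, hy⟩
      obtain ⟨c, rfl⟩ := Ideal.Quotient.mk_surjective y
      rw [hμapp] at hy
      rw [Ideal.Quotient.mk_eq_mk_iff_sub_mem] at hy
      have ha : a = c * r k - (r k * c - a) := by ring
      rw [ha]
      exact Submodule.sub_mem _
        (Submodule.mem_sup_left (Ideal.mem_span_singleton'.2 ⟨c, rfl⟩))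
        (Submodule.mem_sup_right hy)
    · intro ha
      rw [Submodule.mem_sup] at ha
      obtain ⟨y, hy, z, hz, rfl⟩ := ha
      obtain ⟨c, rfl⟩ := Ideal.mem_span_singleton'.1 hy
      refine ⟨Ideal.Quotient.mk I c, ?_⟩
      rw [hμapp, map_add, Ideal.Quotient.eq_zero_iff_mem.2 hz, add_zero, mul_comm]
  have hphisurj : Function.Surjective ⇑φ := by
    intro x
    obtain ⟨a, rfl⟩ := Ideal.Quotient.mk_surjective x
    exact ⟨Ideal.Quotient.mk I a, rfl⟩
  have hmuphi : Function.Exact μ.hom φ.hom :=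
    LinearMap.exact_iff.mpr hrangeker.symm
  -- a projective resolution of M
  let P : ProjectiveResolution Mc := HasProjectiveResolution.out.some
  haveI hflat : ∀ n, Module.Flat R (P.complex.X n) := fun n =>
    letI : Module.Projective R (P.complex.X n) :=
      (IsProjective.iff_projective _).mpr (P.projective n)
    Module.Flat.of_projective
  -- the short exact sequence of complexes
  let fc := (NatTrans.mapHomologicalComplex ((tensoringLeft (ModuleCat.{u} R)).map μ)
    (ComplexShape.down ℕ)).app P.complex
  let gc := (NatTrans.mapHomologicalComplex ((tensoringLeft (ModuleCat.{u} R)).map φ)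
    (ComplexShape.down ℕ)).app P.complex
  have hμφ : μ ≫ φ = 0 := by
    refine ModuleCat.hom_ext (LinearMap.ext fun x => ?_)
    obtain ⟨a, rfl⟩ := Ideal.Quotient.mk_surjective x
    show φ (μ (Ideal.Quotient.mk I a)) = 0
    rw [hμapp, hφapp, Ideal.Quotient.eq_zero_iff_mem]
    exact Ideal.mul_mem_right _ _ (hJ ▸ Submodule.mem_sup_left (Ideal.subset_span rfl))
  have hw : fc ≫ gc = 0 := by
    ext n : 1
    show ((tensoringLeft (ModuleCat.{u} R)).map μ).app (P.complex.X n) ≫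
      ((tensoringLeft (ModuleCat.{u} R)).map φ).app (P.complex.X n) = 0
    rw [← NatTrans.comp_app, ← Functor.map_comp, hμφ]
    show (0 : A ⟶ B) ▷ (P.complex.X n) = 0
    exact MonoidalPreadditive.zero_whiskerRight
  let Sc : ShortComplex (HomologicalComplex (ModuleCat.{u} R) (ComplexShape.down ℕ)) :=
    ShortComplex.mk fc gc hw
  have hSc : Sc.ShortExact := by
    apply HomologicalComplex.shortExact_of_degreewise_shortExact
    intro n
    have hmono : Mono (Sc.map (HomologicalComplex.eval _ _ n)).f := by
      rw [ModuleCat.mono_iff_injective]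
      exact Module.Flat.rTensor_preserves_injective_linearMap
        (M := P.complex.X n) μ.hom hmuinj
    have hepi : Epi (Sc.map (HomologicalComplex.eval _ _ n)).g := by
      rw [ModuleCat.epi_iff_surjective]
      exact LinearMap.rTensor_surjective (P.complex.X n) hphisurj
    have hex : (Sc.map (HomologicalComplex.eval _ _ n)).Exact := by
      rw [ShortComplex.moduleCat_exact_iff]
      intro x hx
      exact ((rTensor_exact (↑(P.complex.X n)) hmuphi hphisurj) x).mp hx
    exact { exact := hex, mono_f := hmono, epi_g := hepi }
  -- the long exact sequence argument
  have hij : (ComplexShape.down ℕ).Rel 1 0 := by simp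
  have hgoal : Function.Surjective ⇑(HomologicalComplex.homologyMap Sc.g 1)
      ↔ Function.Injective ⇑(HomologicalComplex.homologyMap Sc.f 0) := by
    have hex₃ := (ShortComplex.moduleCat_exact_iff _).mp (hSc.homology_exact₃ 1 0 hij)
    have hex₁ := (ShortComplex.moduleCat_exact_iff _).mp (hSc.homology_exact₁ 1 0 hij)
    constructor
    · intro hsurj
      have hδ0 : ∀ x, hSc.δ 1 0 hij x = 0 := by
        intro x
        obtain ⟨y, rfl⟩ := hsurj x
        have hcd := hSc.comp_δ 1 0 hij
        calc hSc.δ 1 0 hij (HomologicalComplex.homologyMap Sc.g 1 y)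
            = (HomologicalComplex.homologyMap Sc.g 1 ≫ hSc.δ 1 0 hij) y := rfl
          _ = (0 : Sc.X₂.homology 1 ⟶ Sc.X₁.homology 0) y := by rw [hcd]
          _ = 0 := rfl
      refine (injective_iff_map_eq_zero _).mpr fun x hx => ?_
      obtain ⟨y, rfl⟩ := hex₁ x hx
      exact hδ0 y
    · intro hinj x
      have h1 : HomologicalComplex.homologyMap Sc.f 0 (hSc.δ 1 0 hij x) = 0 := by
        have hdc := hSc.δ_comp 1 0 hij
        calc HomologicalComplex.homologyMap Sc.f 0 (hSc.δ 1 0 hij x)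
            = (hSc.δ 1 0 hij ≫ HomologicalComplex.homologyMap Sc.f 0) x := rfl
          _ = (0 : Sc.X₃.homology 1 ⟶ Sc.X₁.homology 0) x := by rw [hdc]
          _ = 0 := rfl
      have hδx : hSc.δ 1 0 hij x = 0 := by
        apply hinj
        rw [h1, map_zero]
      exact hex₃ x hδx
  -- identify `homologyMap Sc.f 0` with multiplication by `r k`
  have hfn : ∀ n, Sc.f.f n = r k • 𝟙 (Sc.X₁.X n) := by
    intro n
    show ((tensoringLeft (ModuleCat.{u} R)).map μ).app (P.complex.X n) = _
    refine ModuleCat.hom_ext (TensorProduct.ext' fun a x => ?_)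
    show (μ a) ⊗ₜ[R] x = r k • (a ⊗ₜ[R] x)
    rw [show μ a = r k • a from rfl, TensorProduct.smul_tmul']
  have hcomp : (HomologicalComplex.shortComplexFunctor (ModuleCat.{u} R)
      (ComplexShape.down ℕ) 0).map Sc.f = r k • 𝟙 (Sc.X₁.sc 0) := by
    exact ShortComplex.hom_ext _ _ (hfn _) (hfn _) (hfn _)
  have hH0 : HomologicalComplex.homologyMap Sc.f 0
      = r k • 𝟙 (Sc.X₁.homology 0) := by
    dsimp only [HomologicalComplex.homologyMap]
    rw [hcomp, ShortComplex.homologyMap_smul, ShortComplex.homologyMap_id]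
    rfl
  -- identify the 0-th homology with `M ⧸ I M`
  haveI : PreservesFiniteColimits ((tensoringLeft (ModuleCat.{u} R)).obj A) := by
    have h : PreservesColimits (tensorLeft A) := inferInstance
    exact @Limits.PreservesColimits.preservesFiniteColimits _ _ _ _ (tensorLeft A) h
  let e : Sc.X₁.homology 0 ≅ ((tensoringLeft (ModuleCat.{u} R)).obj A).obj Mc :=
    (P.isoLeftDerivedObj ((tensoringLeft (ModuleCat.{u} R)).obj A) 0).symm ≪≫
      (Functor.leftDerivedZeroIsoSelf ((tensoringLeft (ModuleCat.{u} R)).obj A)).app Mc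
  let eLin : (Sc.X₁.homology 0 : Type u) ≃ₗ[R] (M ⧸ (I • ⊤ : Submodule R M)) :=
    e.toLinearEquiv ≪≫ₗ (TensorProduct.quotTensorEquivQuotSMul M I)
  have hfin : (Function.Injective fun m : M ⧸ (I • ⊤ : Submodule R M) => r k • m)
      ↔ Function.Injective ⇑(HomologicalComplex.homologyMap Sc.f 0) := by
    rw [hH0]
    exact smulInj_congr eLin.symm (r k)
  -- put everything together
  rw [Tor_map, ProjectiveResolution.leftDerived_app_eq _ P 1]
  exact hfin.trans (hgoal.symm.trans (@surj_comp_iso_iff R _ _ _ _ _ _ _ _ (Iso.isIso_hom _) (Iso.isIso_inv _)).symm)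
end

section
/- Let S be a commutative ring in which 2 is a nonzerodivisor, let ū ∈ S[[u]] be a power series with zero constant term satisfying ū ≡ −u mod (u²), and let σ : S[[u]] → S[[u]] be the S-algebra endomorphism given by substituting u ↦ ū; assume σ is an involution, i.e. σ(ū) = u. Then for a power series f ∈ S[[u]], one has σ(f) = f if and only if f lies in S[[w]], the image of the substitution homomorphism S[[t]] → S[[u]] sending t to w := u·ū. -/
open PowerSeries

/-- Substitution of the power series `w` (with zero constant term) into the power
series `f`: the coefficient of `u^n` in `f(w)` is `∑_{k ≤ n} f_k · (w^k)_n`,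
which is the usual composition of formal power series. -/
noncomputable def PowerSeries.substInto {S : Type*} [CommRing S] (w f : PowerSeries S) :
    PowerSeries S :=
  PowerSeries.mk fun n =>
    ∑ k ∈ Finset.range (n + 1), PowerSeries.coeff k f * PowerSeries.coeff n (w ^ k)

namespace SubstAux

variable {S : Type*} [CommRing S]

lemma coeff_substInto (w f : PowerSeries S) (n : ℕ) :
    coeff n (w.substInto f) =
      ∑ k ∈ Finset.range (n + 1), coeff k f * coeff n (w ^ k) := by
  simp [PowerSeries.substInto]

lemma coeff_pow_eq_zero {w : PowerSeries S} (hw : constantCoeff w = 0)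
    {k n : ℕ} (h : n < k) : coeff n (w ^ k) = 0 := by
  have hd : (X : PowerSeries S) ^ k ∣ w ^ k := pow_dvd_pow_of_dvd (X_dvd_iff.mpr hw) k
  exact (X_pow_dvd_iff.mp hd) n h

lemma substInto_congr {w f g : PowerSeries S} {n : ℕ}
    (h : ∀ k ≤ n, coeff k f = coeff k g) :
    coeff n (w.substInto f) = coeff n (w.substInto g) := by
  rw [coeff_substInto, coeff_substInto]
  refine Finset.sum_congr rfl fun k hk => ?_
  rw [h k (Nat.lt_succ_iff.mp (Finset.mem_range.mp hk))]

lemma substInto_coe {w : PowerSeries S} (hw : constantCoeff w = 0) (p : Polynomial S) :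
    w.substInto (p : PowerSeries S) = p.eval₂ (PowerSeries.C (R := S)) w := by
  ext n
  rw [coeff_substInto,
    Polynomial.eval₂_eq_sum_range' (PowerSeries.C (R := S))
      (Nat.lt_succ_of_le (le_max_left p.natDegree n)) w, map_sum]
  simp only [coeff_C_mul, Polynomial.coeff_coe]
  refine Finset.sum_subset (Finset.range_subset_range.mpr (Nat.succ_le_succ (le_max_right _ _)))
    (fun i _ hi => ?_)
  rw [coeff_pow_eq_zero hw (Nat.lt_of_succ_le (Nat.not_lt.mp (fun h => hi (Finset.mem_range.mpr h)))), mul_zero]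

lemma substInto_add (w f g : PowerSeries S) :
    w.substInto (f + g) = w.substInto f + w.substInto g := by
  ext n
  simp [coeff_substInto, add_mul, Finset.sum_add_distrib]

lemma substInto_sub (w f g : PowerSeries S) :
    w.substInto (f - g) = w.substInto f - w.substInto g := by
  ext n
  simp [coeff_substInto, sub_mul, Finset.sum_sub_distrib]

lemma substInto_mul {w : PowerSeries S} (hw : constantCoeff w = 0) (f g : PowerSeries S) :
    w.substInto (f * g) = w.substInto f * w.substInto g := by
  ext n
  set pf := trunc (n + 1) f with hpf
  set pg := trunc (n + 1) g with hpg
  have hf : ∀ k ≤ n, coeff k f = coeff k (pf : PowerSeries S) := fun k hk => by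
    rw [Polynomial.coeff_coe, hpf, coeff_trunc, if_pos (Nat.lt_succ_of_le hk)]
  have hg : ∀ k ≤ n, coeff k g = coeff k (pg : PowerSeries S) := fun k hk => by
    rw [Polynomial.coeff_coe, hpg, coeff_trunc, if_pos (Nat.lt_succ_of_le hk)]
  have h1 : coeff n (w.substInto (f * g))
      = coeff n (w.substInto (((pf * pg : Polynomial S) : PowerSeries S))) := by
    refine substInto_congr fun k hk => ?_
    rw [Polynomial.coe_mul, coeff_mul, coeff_mul]
    refine Finset.sum_congr rfl fun ij hij => ?_
    have hijm := Finset.HasAntidiagonal.mem_antidiagonal.mp hij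
    rw [hf ij.1 (le_trans (le_trans (Nat.le_add_right _ _) hijm.le) hk),
      hg ij.2 (le_trans (le_trans (Nat.le_add_left _ _) hijm.le) hk)]
  have h2 : coeff n (w.substInto f * w.substInto g)
      = coeff n (w.substInto (pf : PowerSeries S) * w.substInto (pg : PowerSeries S)) := by
    rw [coeff_mul, coeff_mul]
    refine Finset.sum_congr rfl fun ij hij => ?_
    have hijm := Finset.HasAntidiagonal.mem_antidiagonal.mp hij
    rw [substInto_congr (fun k hk => hf k (le_trans hk (le_trans (Nat.le_add_right _ _) hijm.le))),
      substInto_congr (fun k hk => hg k (le_trans hk (le_trans (Nat.le_add_left _ _) hijm.le)))]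
  rw [h1, h2, substInto_coe hw, substInto_coe hw, substInto_coe hw, Polynomial.eval₂_mul]

lemma substInto_C {w : PowerSeries S} (hw : constantCoeff w = 0) (a : S) :
    w.substInto (C a) = C a := by
  have := substInto_coe hw (Polynomial.C a)
  simpa using this

lemma substInto_one {w : PowerSeries S} (hw : constantCoeff w = 0) :
    w.substInto 1 = 1 := by
  simpa using substInto_C hw 1

lemma substInto_X {w : PowerSeries S} (hw : constantCoeff w = 0) :
    w.substInto X = w := by
  have := substInto_coe hw (Polynomial.X)
  simpa using this

lemma substInto_pow {w : PowerSeries S} (hw : constantCoeff w = 0) (f : PowerSeries S) (k : ℕ) :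
    w.substInto (f ^ k) = (w.substInto f) ^ k := by
  induction k with
  | zero => simpa using substInto_one hw
  | succ k ih => rw [pow_succ, substInto_mul hw, ih, pow_succ]

end SubstAux
namespace SubstAux

variable {S : Type*} [CommRing S]

/-- The remainder sequence: repeatedly strip off the next `w`-power term. -/
noncomputable def rSeq (w f : PowerSeries S) : ℕ → PowerSeries S
  | 0 => f
  | n + 1 => rSeq w f n
      - C (coeff (2 * n) (rSeq w f n) * (-1) ^ n) * w ^ n

lemma rSeq_zero (w f : PowerSeries S) : rSeq w f 0 = f := rfl

lemma rSeq_succ (w f : PowerSeries S) (n : ℕ) :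
    rSeq w f (n + 1) = rSeq w f n
      - C (coeff (2 * n) (rSeq w f n) * (-1) ^ n) * w ^ n := rfl

lemma rSeq_eq_sub_sum (w f : PowerSeries S) (n : ℕ) :
    rSeq w f n = f - ∑ k ∈ Finset.range n,
      C (coeff (2 * k) (rSeq w f k) * (-1) ^ k) * w ^ k := by
  induction n with
  | zero => simp [rSeq_zero]
  | succ n ih => rw [rSeq_succ, Finset.sum_range_succ]; linear_combination ih

end SubstAux

open SubstAux in
/-- The fixed ring of the involution `σ : f(u) ↦ f(ū)` is exactly the image
`S[[w]]` of `S[[t]] → S[[u]]`, `t ↦ w := u·ū`. -/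
theorem fixed_points_of_conjugation_eq_image_of_uubar
    {S : Type*} [CommRing S] (h2 : (2 : S) ∈ nonZeroDivisors S)
    (ubar : PowerSeries S) (h0 : PowerSeries.constantCoeff ubar = 0)
    (hcong : ubar + PowerSeries.X ∈ Ideal.span {(PowerSeries.X : PowerSeries S) ^ 2})
    (hinv : PowerSeries.substInto ubar ubar = PowerSeries.X)
    (f : PowerSeries S) :
    PowerSeries.substInto ubar f = f ↔
      ∃ g : PowerSeries S, PowerSeries.substInto (PowerSeries.X * ubar) g = f := by
  obtain ⟨t, ht⟩ := Ideal.mem_span_singleton.mp hcong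
  set v : PowerSeries S := X * t - 1 with hvdef
  have hv : ubar = X * v := by rw [hvdef]; linear_combination ht
  have hvc : constantCoeff v = -1 := by simp [hvdef]
  set w : PowerSeries S := X * ubar with hwdef
  have hw0 : constantCoeff w = 0 := by simp [hwdef]
  have hwk : ∀ k : ℕ, w ^ k = X ^ (2 * k) * v ^ k := by
    intro k
    rw [hwdef, hv, show (X : PowerSeries S) * (X * v) = X ^ 2 * v by ring, mul_pow, ← pow_mul]
  have factA : ∀ {m k : ℕ}, m < 2 * k → coeff m (w ^ k) = 0 := by
    intro m k h
    rw [hwk]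
    exact X_pow_dvd_iff.mp ⟨v ^ k, rfl⟩ m h
  have factB : ∀ k : ℕ, coeff (2 * k) (w ^ k) = (-1) ^ k := by
    intro k
    rw [hwk]
    have h := coeff_X_pow_mul (v ^ k) (2 * k) 0
    rw [zero_add] at h
    rw [h, coeff_zero_eq_constantCoeff, map_pow, hvc]
  have factC : ∀ m : ℕ, coeff m (ubar ^ m) = (-1) ^ m := by
    intro m
    rw [hv, mul_pow]
    have h := coeff_X_pow_mul (v ^ m) m 0
    rw [zero_add] at h
    rw [h, coeff_zero_eq_constantCoeff, map_pow, hvc]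
  have hσw : ubar.substInto w = w := by
    rw [hwdef, substInto_mul h0, substInto_X h0, hinv, mul_comm]
  have hodd : ∀ (h : PowerSeries S) (n : ℕ), ubar.substInto h = h →
      (∀ j ≤ 2 * n, coeff j h = 0) → coeff (2 * n + 1) h = 0 := by
    intro h n hfix hz
    have hc : coeff (2 * n + 1) (ubar.substInto h) = coeff (2 * n + 1) h := by rw [hfix]
    rw [coeff_substInto, Finset.sum_range_succ] at hc
    have hrest : ∑ k ∈ Finset.range (2 * n + 1),
        coeff k h * coeff (2 * n + 1) (ubar ^ k) = 0 :=
      Finset.sum_eq_zero fun k hk => by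
        rw [hz k (Nat.lt_succ_iff.mp (Finset.mem_range.mp hk)), zero_mul]
    rw [hrest, zero_add, factC, Odd.neg_one_pow ⟨n, by ring⟩] at hc
    have h2' : coeff (2 * n + 1) h * 2 = 0 := by linear_combination -hc
    exact (mem_nonZeroDivisors_iff.mp h2).2 _ h2'
  constructor
  · -- forward direction
    intro hf
    have hinvr : ∀ n, ubar.substInto (rSeq w f n) = rSeq w f n ∧
        ∀ m < 2 * n, coeff m (rSeq w f n) = 0 := by
      intro n
      induction n with
      | zero => exact ⟨by rw [rSeq_zero]; exact hf, fun m hm => absurd hm (by omega)⟩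
      | succ n ih =>
        obtain ⟨ihfix, ihz⟩ := ih
        have hfix : ubar.substInto (rSeq w f (n + 1)) = rSeq w f (n + 1) := by
          rw [rSeq_succ, substInto_sub, substInto_mul h0, substInto_C h0,
            substInto_pow h0, hσw, ihfix]
        have hz2n : ∀ m ≤ 2 * n, coeff m (rSeq w f (n + 1)) = 0 := by
          intro m hm
          rw [rSeq_succ, map_sub, coeff_C_mul]
          rcases lt_or_eq_of_le hm with hlt | heq
          · rw [ihz m hlt, factA hlt, mul_zero, sub_zero]
          · subst heq
            rw [factB, mul_assoc, ← pow_add, Even.neg_one_pow ⟨n, rfl⟩, mul_one, sub_self]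
        refine ⟨hfix, fun m hm => ?_⟩
        rcases Nat.lt_succ_iff_lt_or_eq.mp (show m < 2 * n + 1 + 1 by omega) with hlt | heq
        · exact hz2n m (Nat.lt_succ_iff.mp hlt)
        · subst heq; exact hodd _ n hfix hz2n
    refine ⟨PowerSeries.mk fun k => coeff (2 * k) (rSeq w f k) * (-1) ^ k, ?_⟩
    ext m
    have h1 : coeff m (rSeq w f (m + 1)) = 0 := (hinvr (m + 1)).2 m (by omega)
    rw [rSeq_eq_sub_sum, map_sub, map_sum, sub_eq_zero] at h1
    rw [coeff_substInto, h1]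
    refine Finset.sum_congr rfl fun k _ => ?_
    rw [coeff_mk, coeff_C_mul]
  · -- backward direction
    rintro ⟨g, rfl⟩
    ext n
    set p := trunc (n + 1) g with hp
    have hgp : ∀ k ≤ n, coeff k g = coeff k (p : PowerSeries S) := fun k hk => by
      rw [Polynomial.coeff_coe, hp, coeff_trunc, if_pos (Nat.lt_succ_of_le hk)]
    have hkey : ∀ k ≤ n, coeff k (w.substInto g) = coeff k (w.substInto (p : PowerSeries S)) :=
      fun k hk => substInto_congr fun j hj => hgp j (le_trans hj hk)
    have hfixp : ubar.substInto (w.substInto (p : PowerSeries S))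
        = w.substInto (p : PowerSeries S) := by
      rw [substInto_coe hw0]
      induction p using Polynomial.induction_on with
      | C a => rw [Polynomial.eval₂_C, substInto_C h0]
      | add q r hq hr => rw [Polynomial.eval₂_add, substInto_add, hq, hr]
      | monomial m a _ =>
        rw [Polynomial.eval₂_mul, Polynomial.eval₂_C, Polynomial.eval₂_X_pow,
          substInto_mul h0, substInto_C h0, substInto_pow h0, hσw]
    calc coeff n (ubar.substInto (w.substInto g))
        = coeff n (ubar.substInto (w.substInto (p : PowerSeries S))) :=
          substInto_congr fun k hk => hkey k hk
      _ = coeff n (w.substInto (p : PowerSeries S)) := by rw [hfixp]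
      _ = coeff n (w.substInto g) := (hkey n le_rfl).symm
end

section
/- Let S be a commutative ring in which 2 is a nonzerodivisor, let ū ∈ S[[u]] be a power series with zero constant term satisfying ū ≡ −u mod (u²), and let σ : S[[u]] → S[[u]] be the S-algebra endomorphism given by substituting u ↦ ū; assume σ is an involution, i.e. σ(ū) = u. Then there exists a unique power series ξ ∈ S[[t]] such that u + ū equals the substitution of w := u·ū into ξ, i.e. u + ū = ξ(u·ū) in S[[u]]. -/
open PowerSeries

namespace XiAux

variable {S : Type*} [CommRing S]

lemma coeff_substInto (w f : PowerSeries S) (n : ℕ) :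
    coeff n (PowerSeries.substInto w f)
      = ∑ k ∈ Finset.range (n + 1), coeff k f * coeff n (w ^ k) :=
  coeff_mk _ _

lemma coeff_pow_eq_zero {w : PowerSeries S} {d : ℕ} (hd : ∀ m < d, coeff m w = 0)
    {k n : ℕ} (h : n < d * k) : coeff n (w ^ k) = 0 := by
  have h1 : (X : PowerSeries S) ^ d ∣ w := X_pow_dvd_iff.mpr hd
  have h2 : (X : PowerSeries S) ^ (d * k) ∣ w ^ k := by
    rw [pow_mul]; exact pow_dvd_pow_of_dvd h1 k
  exact X_pow_dvd_iff.mp h2 n h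

lemma coeff_pow_lead {w : PowerSeries S} {d : ℕ} (hd : ∀ m < d, coeff m w = 0)
    (k : ℕ) : coeff (d * k) (w ^ k) = (coeff d w) ^ k := by
  induction k with
  | zero => simp
  | succ k ih =>
    rw [Nat.mul_succ, pow_succ, coeff_mul, Finset.sum_eq_single (d * k, d)]
    · rw [ih, pow_succ]
    · rintro ⟨a, b⟩ hab hne
      rw [Finset.HasAntidiagonal.mem_antidiagonal] at hab
      simp only at hab ⊢
      by_cases hb : b < d
      · rw [hd b hb, mul_zero]
      · push_neg at hb
        rcases Nat.lt_or_ge a (d * k) with ha | ha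
        · rw [coeff_pow_eq_zero hd ha, zero_mul]
        · exfalso
          apply hne
          have h1 : a + d ≤ d * k + d := hab ▸ Nat.add_le_add_left hb a
          have hA : a = d * k := le_antisymm (Nat.le_of_add_le_add_right h1) ha
          have hB : b = d := by
            rw [hA] at hab
            exact Nat.add_left_cancel hab
          simp [hA, hB]
    · intro h
      exfalso
      exact h (Finset.HasAntidiagonal.mem_antidiagonal.mpr rfl)

lemma coeff_aeval {w : PowerSeries S} (hw : constantCoeff w = 0) (P : Polynomial S) (n : ℕ) :
    coeff n (Polynomial.aeval w P)
      = ∑ k ∈ Finset.range (n + 1), P.coeff k * coeff n (w ^ k) := by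
  have hw' : ∀ m < 1, coeff m w = 0 := by
    intro m hm
    interval_cases m
    simpa using hw
  set N := max (P.natDegree + 1) (n + 1) with hN
  have hdeg : P.natDegree < N := lt_of_lt_of_le (Nat.lt_succ_self _) (le_max_left _ _)
  have hNn : n + 1 ≤ N := le_max_right _ _
  rw [Polynomial.aeval_eq_sum_range' hdeg, map_sum,
    ← Finset.sum_subset (Finset.range_subset_range.mpr hNn)]
  · exact Finset.sum_congr rfl fun k _ => by rw [PowerSeries.coeff_smul, smul_eq_mul]
  · intro k hk hk'
    rw [Finset.mem_range] at hk
    rw [Finset.mem_range, not_lt] at hk'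
    rw [PowerSeries.coeff_smul, coeff_pow_eq_zero hw' (show n < 1 * k by omega), smul_zero]

lemma coeff_substInto_trunc {w : PowerSeries S} (hw : constantCoeff w = 0)
    (f : PowerSeries S) {n N : ℕ} (hN : n < N) :
    coeff n (PowerSeries.substInto w f)
      = coeff n (Polynomial.aeval w (trunc N f)) := by
  rw [coeff_substInto, coeff_aeval hw]
  apply Finset.sum_congr rfl
  intro k hk
  rw [Finset.mem_range] at hk
  rw [coeff_trunc, if_pos (by omega)]

lemma substInto_add (w f g : PowerSeries S) :
    PowerSeries.substInto w (f + g)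
      = PowerSeries.substInto w f + PowerSeries.substInto w g := by
  ext n
  simp [coeff_substInto, add_mul, Finset.sum_add_distrib]

lemma substInto_sub (w f g : PowerSeries S) :
    PowerSeries.substInto w (f - g)
      = PowerSeries.substInto w f - PowerSeries.substInto w g := by
  ext n
  simp [coeff_substInto, sub_mul, Finset.sum_sub_distrib]

lemma substInto_one (w : PowerSeries S) :
    PowerSeries.substInto w 1 = 1 := by
  ext n
  rw [coeff_substInto, Finset.sum_eq_single 0]
  · simp
  · intro k _ hk
    simp [coeff_one, hk]
  · intro h
    simp at h

lemma substInto_X {w : PowerSeries S} (hw : constantCoeff w = 0) :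
    PowerSeries.substInto w X = w := by
  ext n
  rw [coeff_substInto]
  cases n with
  | zero =>
    simp [coeff_X, hw]
  | succ m =>
    rw [Finset.sum_eq_single 1]
    · simp
    · intro k _ hk
      simp [coeff_X, hk]
    · intro h
      rw [Finset.mem_range] at h
      omega

lemma substInto_mul {w : PowerSeries S} (hw : constantCoeff w = 0) (f g : PowerSeries S) :
    PowerSeries.substInto w (f * g)
      = PowerSeries.substInto w f * PowerSeries.substInto w g := by
  ext n
  rw [coeff_substInto_trunc hw (f * g) (Nat.lt_succ_self n)]
  have key : coeff n (Polynomial.aeval w (trunc (n + 1) (f * g)))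
      = coeff n (Polynomial.aeval w (trunc (n + 1) f * trunc (n + 1) g)) := by
    rw [coeff_aeval hw, coeff_aeval hw]
    apply Finset.sum_congr rfl
    intro k hk
    rw [Finset.mem_range] at hk
    congr 1
    rw [coeff_trunc, if_pos (by omega), Polynomial.coeff_mul, PowerSeries.coeff_mul]
    apply Finset.sum_congr rfl
    rintro ⟨a, b⟩ hab
    rw [Finset.HasAntidiagonal.mem_antidiagonal] at hab
    simp only at hab ⊢
    rw [coeff_trunc, coeff_trunc, if_pos (by omega), if_pos (by omega)]
  rw [key, map_mul, PowerSeries.coeff_mul, PowerSeries.coeff_mul]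
  apply Finset.sum_congr rfl
  rintro ⟨a, b⟩ hab
  rw [Finset.HasAntidiagonal.mem_antidiagonal] at hab
  simp only at hab ⊢
  rw [← coeff_substInto_trunc hw f (show a < n + 1 by omega),
    ← coeff_substInto_trunc hw g (show b < n + 1 by omega)]

lemma substInto_pow {w v : PowerSeries S} (hv : constantCoeff v = 0)
    (hfix : PowerSeries.substInto v w = w) (k : ℕ) :
    PowerSeries.substInto v (w ^ k) = w ^ k := by
  induction k with
  | zero => simpa using substInto_one v
  | succ k ih => rw [pow_succ, substInto_mul hv, ih, hfix]

/-- Composition fixed-point: if `v`-substitution fixes all powers of `w`, it fixes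
`substInto w ξ` for every `ξ`. -/
lemma substInto_substInto {v w : PowerSeries S}
    (hfix : ∀ j : ℕ, PowerSeries.substInto v (w ^ j) = w ^ j)
    (hw0 : constantCoeff w = 0) (ξ : PowerSeries S) :
    PowerSeries.substInto v (PowerSeries.substInto w ξ)
      = PowerSeries.substInto w ξ := by
  have hw' : ∀ m < 1, coeff m w = 0 := by
    intro m hm; interval_cases m; simpa using hw0
  ext n
  rw [coeff_substInto]
  have step1 : ∀ k ∈ Finset.range (n + 1),
      coeff k (PowerSeries.substInto w ξ) * coeff n (v ^ k)
        = ∑ j ∈ Finset.range (n + 1),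
            coeff j ξ * coeff k (w ^ j) * coeff n (v ^ k) := by
    intro k hk
    rw [Finset.mem_range] at hk
    rw [coeff_substInto, ← Finset.sum_mul]
    congr 1
    apply Finset.sum_subset (Finset.range_subset_range.mpr (by omega))
    intro j hj hj'
    rw [Finset.mem_range, not_lt] at hj'
    rw [coeff_pow_eq_zero hw' (show k < 1 * j by omega), mul_zero]
  rw [Finset.sum_congr rfl step1, Finset.sum_comm, coeff_substInto]
  apply Finset.sum_congr rfl
  intro j hj
  have hs : ∑ k ∈ Finset.range (n + 1), coeff j ξ * coeff k (w ^ j) * coeff n (v ^ k)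
      = coeff j ξ * ∑ k ∈ Finset.range (n + 1), coeff k (w ^ j) * coeff n (v ^ k) := by
    rw [Finset.mul_sum]
    apply Finset.sum_congr rfl
    intro k _
    ring
  rw [hs, ← coeff_substInto, hfix j]

/-- Even-degree coefficient of a substitution into a series of order `≥ 2`. -/
lemma coeff_even_substInto {w : PowerSeries S} (hw : ∀ m < 2, coeff m w = 0)
    (ξ : PowerSeries S) (k : ℕ) :
    coeff (2 * k) (PowerSeries.substInto w ξ)
      = ∑ j ∈ Finset.range (k + 1), coeff j ξ * coeff (2 * k) (w ^ j) := by
  rw [coeff_substInto]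
  symm
  apply Finset.sum_subset (Finset.range_subset_range.mpr (by omega))
  intro j hj hj'
  rw [Finset.mem_range, not_lt] at hj'
  rw [coeff_pow_eq_zero hw (show 2 * k < 2 * j by omega), mul_zero]

/-- History function for the recursively defined coefficients of `ξ`. -/
noncomputable def xiAux (g w : PowerSeries S) : ℕ → ℕ → S
  | 0 => fun _ => 0
  | k + 1 => fun j =>
      if j = k then
        (-1) ^ k * (coeff (2 * k) g
          - ∑ i ∈ Finset.range k, xiAux g w k i * coeff (2 * k) (w ^ i))
      else xiAux g w k j

/-- The `k`-th coefficient of the solution `ξ`. -/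
noncomputable def xiC (g w : PowerSeries S) (k : ℕ) : S := xiAux g w (k + 1) k

lemma xiAux_stable (g w : PowerSeries S) {j k m : ℕ} (hjk : j < k) (hkm : k ≤ m) :
    xiAux g w m j = xiAux g w k j := by
  induction m with
  | zero => omega
  | succ m ih =>
    rcases Nat.lt_or_ge k (m + 1) with h | h
    · have hstep : xiAux g w (m + 1) j = xiAux g w m j := by
        have hjm : j ≠ m := by omega
        simp only [xiAux, hjm, if_false]
      rw [hstep, ih (by omega)]
    · have : k = m + 1 := by omega
      rw [this]

lemma xiC_eq (g w : PowerSeries S) (k : ℕ) :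
    xiC g w k = (-1) ^ k * (coeff (2 * k) g
      - ∑ i ∈ Finset.range k, xiC g w i * coeff (2 * k) (w ^ i)) := by
  show xiAux g w (k + 1) k = _
  rw [xiAux]
  beta_reduce
  rw [if_pos rfl]
  congr 2
  apply Finset.sum_congr rfl
  intro i hi
  rw [Finset.mem_range] at hi
  rw [xiAux_stable g w (Nat.lt_succ_self i) hi]
  rfl

lemma neg_one_pow_sq (k : ℕ) : ((-1 : S) ^ k) * ((-1 : S) ^ k) = 1 := by
  rw [← pow_add, ← two_mul, pow_mul]
  norm_num

/-- Key even-coefficient identity: `substInto w (mk (xiC g w))` matches `g`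
in all even degrees, provided `w` has order `2` with leading coefficient `-1`. -/
lemma coeff_even_eq {w g : PowerSeries S} (hw : ∀ m < 2, coeff m w = 0)
    (hw2 : coeff 2 w = -1) (k : ℕ) :
    coeff (2 * k) (PowerSeries.substInto w (PowerSeries.mk (xiC g w)))
      = coeff (2 * k) g := by
  rw [coeff_even_substInto hw, Finset.sum_range_succ]
  have hlead : coeff (2 * k) (w ^ k) = (-1 : S) ^ k := by
    rw [coeff_pow_lead hw k, hw2]
  rw [hlead]
  simp only [coeff_mk]
  rw [xiC_eq g w k, mul_comm ((-1 : S) ^ k), mul_assoc, neg_one_pow_sq, mul_one]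
  ring

end XiAux

open XiAux in
/-- There is a unique power series `ξ ∈ S[[t]]` with `ξ(u·ū) = u + ū`. -/
theorem exists_unique_xi_of_conjugation
    {S : Type*} [CommRing S] (h2 : (2 : S) ∈ nonZeroDivisors S)
    (ubar : PowerSeries S) (h0 : PowerSeries.constantCoeff ubar = 0)
    (hcong : ubar + PowerSeries.X ∈ Ideal.span {(PowerSeries.X : PowerSeries S) ^ 2})
    (hinv : PowerSeries.substInto ubar ubar = PowerSeries.X) :
    ∃! ξ : PowerSeries S,
      PowerSeries.substInto (PowerSeries.X * ubar) ξ = PowerSeries.X + ubar := by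
  classical
  set w : PowerSeries S := PowerSeries.X * ubar with hwdef
  set g : PowerSeries S := PowerSeries.X + ubar with hgdef
  have hu1 : coeff 1 ubar = -1 := by
    rw [Ideal.mem_span_singleton] at hcong
    have h := X_pow_dvd_iff.mp hcong 1 (by norm_num)
    rw [map_add, coeff_X, if_pos rfl] at h
    exact eq_neg_of_add_eq_zero_left h
  have hulow : ∀ m < 1, coeff m ubar = 0 := by
    intro m hm; interval_cases m; simpa using h0
  have hwlow : ∀ m < 2, coeff m w = 0 := by
    intro m hm
    interval_cases m
    · simp [hwdef, map_mul]
    · rw [hwdef, show (1 : ℕ) = 0 + 1 from rfl, coeff_succ_X_mul,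
        coeff_zero_eq_constantCoeff]
      exact h0
  have hw0 : constantCoeff w = 0 := by
    simpa using hwlow 0 (by norm_num)
  have hw2 : coeff 2 w = -1 := by
    rw [hwdef, show (2 : ℕ) = 1 + 1 from rfl, coeff_succ_X_mul, hu1]
  have hfixw : PowerSeries.substInto ubar w = w := by
    rw [hwdef, substInto_mul h0, substInto_X h0, hinv, mul_comm]
  have hfixpow : ∀ j : ℕ, PowerSeries.substInto ubar (w ^ j) = w ^ j :=
    substInto_pow h0 hfixw
  have hfixg : PowerSeries.substInto ubar g = g := by
    rw [hgdef, substInto_add, substInto_X h0, hinv, add_comm]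
  set ξ : PowerSeries S := PowerSeries.mk (xiC g w) with hxidef
  have heven : ∀ k : ℕ, coeff (2 * k) (g - PowerSeries.substInto w ξ) = 0 := by
    intro k
    rw [map_sub, hxidef, coeff_even_eq hwlow hw2, sub_self]
  have hfixh : PowerSeries.substInto ubar (g - PowerSeries.substInto w ξ)
      = g - PowerSeries.substInto w ξ := by
    rw [substInto_sub, hfixg, substInto_substInto hfixpow hw0]
  have hzero : ∀ n : ℕ, coeff n (g - PowerSeries.substInto w ξ) = 0 := by
    intro n
    induction n using Nat.strong_induction_on with
    | _ n ih =>
      rcases Nat.even_or_odd n with ⟨k, hk⟩ | ⟨k, hk⟩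
      · have hn : n = 2 * k := by omega
        rw [hn]
        exact heven k
      · have hnlead : coeff n (ubar ^ n) = (-1 : S) ^ n := by
          have h := coeff_pow_lead hulow n
          rwa [one_mul, hu1] at h
        have e : coeff n (g - PowerSeries.substInto w ξ)
            = coeff n (g - PowerSeries.substInto w ξ) * ((-1 : S) ^ n) := by
          conv_lhs => rw [← hfixh]
          rw [coeff_substInto, Finset.sum_eq_single n]
          · rw [hnlead]
          · intro j hj hjn
            rw [Finset.mem_range] at hj
            rw [ih j (by omega), zero_mul]
          · intro hmem
            exact absurd (Finset.mem_range.mpr (Nat.lt_succ_self n)) hmem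
        have hodd : (-1 : S) ^ n = -1 := Odd.neg_one_pow ⟨k, hk⟩
        rw [hodd, mul_neg_one] at e
        have h4 : coeff n (g - PowerSeries.substInto w ξ) * 2 = 0 := by
          rw [mul_two]
          nth_rewrite 1 [e]
          exact neg_add_cancel _
        exact h2.2 _ h4
  have hmain : PowerSeries.substInto w ξ = g := by
    ext n
    have h := hzero n
    rw [map_sub, sub_eq_zero] at h
    exact h.symm
  refine ⟨ξ, hmain, ?_⟩
  intro ξ' hξ'
  have heq : PowerSeries.substInto w ξ' = PowerSeries.substInto w ξ := by
    rw [hmain, hξ']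
  ext k
  induction k using Nat.strong_induction_on with
  | _ k ih =>
    have e1 := congrArg (coeff (2 * k)) heq
    rw [coeff_even_substInto hwlow, coeff_even_substInto hwlow,
      Finset.sum_range_succ, Finset.sum_range_succ] at e1
    have hsum : ∑ i ∈ Finset.range k, coeff i ξ' * coeff (2 * k) (w ^ i)
        = ∑ i ∈ Finset.range k, coeff i ξ * coeff (2 * k) (w ^ i) := by
      apply Finset.sum_congr rfl
      intro i hi
      rw [Finset.mem_range] at hi
      rw [ih i hi]
    rw [hsum, coeff_pow_lead hwlow, hw2] at e1
    have e2 : coeff k ξ' * (-1 : S) ^ k = coeff k ξ * (-1 : S) ^ k :=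
      add_left_cancel e1
    calc coeff k ξ' = coeff k ξ' * ((-1 : S) ^ k * (-1 : S) ^ k) := by
          rw [neg_one_pow_sq, mul_one]
      _ = coeff k ξ' * (-1 : S) ^ k * (-1 : S) ^ k := by ring
      _ = coeff k ξ * (-1 : S) ^ k * (-1 : S) ^ k := by rw [e2]
      _ = coeff k ξ := by rw [mul_assoc, neg_one_pow_sq, mul_one]
end

section
/- Let S be a commutative ring and let w ∈ S[[u]] be a power series with w ≡ c·u² mod (u³) for some unit c of S. Then S[[u]] is a free module over the subring S[[w]] (the image of the substitution homomorphism S[[t]] → S[[u]] sending t to w) with basis {1, u}; equivalently, every f ∈ S[[u]] can be written uniquely as f = g(w) + u·h(w) for power series g, h ∈ S[[t]]. -/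
open PowerSeries

noncomputable def solveTri {S : Type*} [CommRing S] (d : ℕ → S) (E : ℕ → ℕ → S)
    (fc : ℕ → S) : ℕ → S
  | n => d n * (fc n - ∑ j ∈ (Finset.range n).attach, solveTri d E fc j.1 * E j.1 n)
termination_by n => n
decreasing_by exact Finset.mem_range.mp j.2

lemma solveTri_eq {S : Type*} [CommRing S] (d : ℕ → S) (E : ℕ → ℕ → S) (fc : ℕ → S) (n : ℕ) :
    solveTri d E fc n = d n * (fc n - ∑ j ∈ Finset.range n, solveTri d E fc j * E j n) := by
  rw [solveTri]
  rw [Finset.sum_attach (Finset.range n) (fun j => solveTri d E fc j * E j n)]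

lemma sum_range_two_mul {M : Type*} [AddCommMonoid M] (N : ℕ) (F : ℕ → M) :
    ∑ j ∈ Finset.range (2 * N), F j
      = ∑ m ∈ Finset.range N, F (2 * m) + ∑ m ∈ Finset.range N, F (2 * m + 1) := by
  induction N with
  | zero => simp
  | succ N ih =>
    rw [show 2 * (N + 1) = (2 * N) + 1 + 1 by ring, Finset.sum_range_succ,
      Finset.sum_range_succ, ih, Finset.sum_range_succ, Finset.sum_range_succ]
    abel

/-- If `w ≡ c·u² mod (u³)` with `c` a unit, then every `f ∈ S[[u]]` has a unique
expression `f = g(w) + u·h(w)`; i.e. `S[[u]]` is free with basis `{1, u}` over the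
image `S[[w]]` of `S[[t]] → S[[u]]`, `t ↦ w`. -/
theorem free_basis_one_u_over_Sw
    {S : Type*} [CommRing S] (c : S) (hc : IsUnit c) (w : PowerSeries S)
    (hw : w - PowerSeries.C c * PowerSeries.X ^ 2 ∈
      Ideal.span {(PowerSeries.X : PowerSeries S) ^ 3})
    (f : PowerSeries S) :
    ∃! gh : PowerSeries S × PowerSeries S,
      f = PowerSeries.substInto w gh.1 + PowerSeries.X * PowerSeries.substInto w gh.2 := by
  obtain ⟨r, hr⟩ := Ideal.mem_span_singleton.mp hw
  have hwq : w = X ^ 2 * (C c + X * r) := by linear_combination hr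
  -- coefficient vanishing below degree 2k
  have LA : ∀ k n : ℕ, n < 2 * k → coeff n (w ^ k) = 0 := by
    intro k n hn
    have hd : (X : PowerSeries S) ^ (2 * k) ∣ w ^ k := by
      rw [pow_mul]
      exact pow_dvd_pow_of_dvd ⟨C c + X * r, hwq⟩ k
    exact X_pow_dvd_iff.mp hd n hn
  -- leading coefficient
  have LB : ∀ k : ℕ, coeff (2 * k) (w ^ k) = c ^ k := by
    intro k
    have h1 : w ^ k = X ^ (2 * k) * (C c + X * r) ^ k := by
      rw [hwq, mul_pow, ← pow_mul]
    have h2 := PowerSeries.coeff_X_pow_mul ((C c + X * r) ^ k) (2 * k) 0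
    have h2' : coeff (2 * k) (X ^ (2 * k) * (C c + X * r) ^ k)
        = coeff 0 ((C c + X * r) ^ k) := by simpa using h2
    rw [h1, h2']
    simp [coeff_zero_eq_constantCoeff, map_pow]
  obtain ⟨u, hu⟩ := hc
  set ci : S := ((u⁻¹ : Sˣ) : S) with hci_def
  have hci : c * ci = 1 := by rw [← hu]; exact u.mul_inv
  have hkpow : ∀ k : ℕ, c ^ k * ci ^ k = 1 := by
    intro k; rw [← mul_pow, hci, one_pow]
  set E : ℕ → ℕ → S := fun j n =>
    if j % 2 = 0 then coeff n (w ^ (j / 2))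
    else if n = 0 then 0 else coeff (n - 1) (w ^ (j / 2)) with hE_def
  have E_even : ∀ m n : ℕ, E (2 * m) n = coeff n (w ^ m) := by
    intro m n
    simp [hE_def, Nat.mul_mod_right, Nat.mul_div_cancel_left _ (by norm_num : 0 < 2)]
  have E_odd : ∀ m n : ℕ, E (2 * m + 1) n = if n = 0 then 0 else coeff (n - 1) (w ^ m) := by
    intro m n
    have h1 : (2 * m + 1) % 2 = 1 := by omega
    have h2 : (2 * m + 1) / 2 = m := by omega
    simp [hE_def, h1, h2]
  have E_zero : ∀ j n : ℕ, n < j → E j n = 0 := by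
    intro j n hn
    rcases Nat.even_or_odd j with ⟨m, rfl⟩ | ⟨m, rfl⟩
    · rw [show m + m = 2 * m by ring] at *
      exact E_even m n ▸ LA m n (by omega)
    · rw [E_odd]
      rcases Nat.eq_zero_or_pos n with rfl | hp
      · simp
      · rw [if_neg (by omega)]
        exact LA m (n - 1) (by omega)
  have E_diag : ∀ n : ℕ, E n n = c ^ (n / 2) := by
    intro n
    rcases Nat.even_or_odd n with ⟨m, rfl⟩ | ⟨m, rfl⟩
    · rw [show m + m = 2 * m by ring, E_even, show (2 * m) / 2 = m by omega, LB]
    · rw [show 2 * m + 1 = 2 * m + 1 by ring, E_odd, if_neg (by omega),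
        show 2 * m + 1 - 1 = 2 * m by omega, LB, show (2 * m + 1) / 2 = m by omega]
  set A : PowerSeries S → PowerSeries S → ℕ → S := fun g h j =>
    if j % 2 = 0 then coeff (j / 2) g else coeff (j / 2) h with hA_def
  -- key coefficient formula
  have key : ∀ (g h : PowerSeries S) (n : ℕ),
      coeff n (PowerSeries.substInto w g + X * PowerSeries.substInto w h)
        = ∑ j ∈ Finset.range (n + 1), A g h j * E j n := by
    intro g h n
    have hsub : Finset.range (n + 1) ⊆ Finset.range (2 * (n + 1)) :=
      Finset.range_subset_range.mpr (by omega)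
    rw [show (∑ j ∈ Finset.range (n + 1), A g h j * E j n)
        = ∑ j ∈ Finset.range (2 * (n + 1)), A g h j * E j n from
      Finset.sum_subset hsub (fun j hj hj' => by
        rw [E_zero j n (by simp [Finset.mem_range] at hj hj' ⊢; omega), mul_zero])]
    rw [sum_range_two_mul]
    have hAe : ∀ m, A g h (2 * m) = coeff m g := by
      intro m
      simp [hA_def, Nat.mul_mod_right, Nat.mul_div_cancel_left _ (by norm_num : 0 < 2)]
    have hAo : ∀ m, A g h (2 * m + 1) = coeff m h := by
      intro m
      have h1 : (2 * m + 1) % 2 = 1 := by omega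
      have h2 : (2 * m + 1) / 2 = m := by omega
      simp [hA_def, h1, h2]
    have hg : ∑ m ∈ Finset.range (n + 1), A g h (2 * m) * E (2 * m) n
        = coeff n (PowerSeries.substInto w g) := by
      rw [PowerSeries.substInto, coeff_mk]
      exact Finset.sum_congr rfl fun m _ => by rw [hAe, E_even]
    have hh : ∑ m ∈ Finset.range (n + 1), A g h (2 * m + 1) * E (2 * m + 1) n
        = coeff n (X * PowerSeries.substInto w h) := by
      rcases n with _ | n'
      · simp [hAo, E_odd]
      · rw [PowerSeries.coeff_succ_X_mul, PowerSeries.substInto, coeff_mk,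
          Finset.sum_range_succ]
        have hlast : A g h (2 * (n' + 1) + 1) * E (2 * (n' + 1) + 1) (n' + 1) = 0 := by
          rw [E_odd, if_neg (by omega), show n' + 1 - 1 = n' by omega,
            LA (n' + 1) n' (by omega), mul_zero]
        rw [hlast, add_zero]
        exact Finset.sum_congr rfl fun m _ => by
          rw [hAo, E_odd, if_neg (by omega), show n' + 1 - 1 = n' by omega]
    rw [map_add, hg, hh]
  -- the solution coefficients
  set a : ℕ → S := solveTri (fun n => ci ^ (n / 2)) E (fun n => coeff n f) with ha_def
  have hfa : ∀ n : ℕ, coeff n f = ∑ j ∈ Finset.range (n + 1), a j * E j n := by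
    intro n
    rw [Finset.sum_range_succ, E_diag, ha_def, solveTri_eq]
    rw [mul_comm (ci ^ (n / 2)) _, mul_assoc, ← mul_pow, mul_comm ci c, hci, one_pow, mul_one]
    ring
  set g : PowerSeries S := PowerSeries.mk fun m => a (2 * m) with hg_def
  set h : PowerSeries S := PowerSeries.mk fun m => a (2 * m + 1) with hh_def
  have hA : ∀ j, A g h j = a j := by
    intro j
    rcases Nat.even_or_odd j with ⟨m, rfl⟩ | ⟨m, rfl⟩
    · rw [show m + m = 2 * m by ring]
      have h1 : (2 * m) % 2 = 0 := by omega
      have h2 : (2 * m) / 2 = m := by omega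
      simp [hA_def, h1, h2, hg_def]
    · have h1 : (2 * m + 1) % 2 = 1 := by omega
      have h2 : (2 * m + 1) / 2 = m := by omega
      simp [hA_def, h1, h2, hh_def]
  refine ⟨(g, h), ?_, ?_⟩
  · ext n
    rw [key, hfa n]
    exact Finset.sum_congr rfl fun j _ => by rw [hA]
  · rintro ⟨g', h'⟩ hP
    have heq : ∀ n : ℕ, ∑ j ∈ Finset.range (n + 1), A g' h' j * E j n
        = ∑ j ∈ Finset.range (n + 1), a j * E j n := by
      intro n
      rw [← key g' h' n, ← hfa n, ← hP]
    have huniq : ∀ n, A g' h' n = a n := by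
      intro n
      induction n using Nat.strong_induction_on with
      | _ n ih =>
        have h1 := heq n
        have hsums : ∑ j ∈ Finset.range n, A g' h' j * E j n
            = ∑ j ∈ Finset.range n, a j * E j n :=
          Finset.sum_congr rfl fun j hj => by rw [ih j (Finset.mem_range.mp hj)]
        rw [Finset.sum_range_succ, Finset.sum_range_succ, hsums] at h1
        have h2 : A g' h' n * E n n = a n * E n n := add_left_cancel h1
        calc A g' h' n = A g' h' n * (c ^ (n / 2) * ci ^ (n / 2)) := by
              rw [hkpow, mul_one]
          _ = (A g' h' n * E n n) * ci ^ (n / 2) := by rw [E_diag]; ring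
          _ = (a n * E n n) * ci ^ (n / 2) := by rw [h2]
          _ = a n * (c ^ (n / 2) * ci ^ (n / 2)) := by rw [E_diag]; ring
          _ = a n := by rw [hkpow, mul_one]
    have hg' : g' = g := by
      ext m
      have := huniq (2 * m)
      have h1 : (2 * m) % 2 = 0 := by omega
      have h2 : (2 * m) / 2 = m := by omega
      simp [hA_def, h1, h2, hg_def] at this ⊢
      exact this
    have hh' : h' = h := by
      ext m
      have := huniq (2 * m + 1)
      have h1 : (2 * m + 1) % 2 = 1 := by omega
      have h2 : (2 * m + 1) / 2 = m := by omega
      simp [hA_def, h1, h2, hh_def] at this ⊢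
      exact this
    exact Prod.ext hg' hh'
end

section
/- Let R be a commutative ring, let v₀, …, v_n ∈ R, and let f ∈ R[[w]] be a formal power series. For 0 ≤ k ≤ n+1 write I_k for the ideal of R generated by v₀,…,v_{k−1} (with I₀ = 0). Assume that for each 0 ≤ k ≤ n: (i) the image of v_k in R/I_k is a nonzerodivisor, and (ii) the image of f in (R/I_{k+1})[[w]] is a nonzerodivisor. Then (v₀, …, v_n) is a regular sequence on the R[[w]]-module R[[w]]/(f): that is, for each 0 ≤ k ≤ n, multiplication by v_k is injective on the quotient R[[w]]/(f, v₀, …, v_{k−1}), where (f, v₀, …, v_{k−1}) denotes the ideal of R[[w]] generated by f and v₀,…,v_{k−1}. -/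
open PowerSeries

section Aux
variable {R : Type*} [CommRing R]

omit [CommRing R] in
lemma aux_range_fin (k : ℕ) (v : ℕ → R) :
    Set.range (fun i : Fin k => v i) = v '' Set.Iio k := by
  ext x
  simp only [Set.mem_range, Set.mem_image, Set.mem_Iio]
  constructor
  · rintro ⟨i, rfl⟩; exact ⟨i, i.2, rfl⟩
  · rintro ⟨i, hi, rfl⟩; exact ⟨⟨i, hi⟩, rfl⟩

/-- If all coefficients of `p` lie in the span of `v '' Iio k`, then
`p` lies in the span of the constants `C (v i)`, `i < k`. -/
lemma aux_mem_span_C (k : ℕ) (v : ℕ → R) (p : PowerSeries R)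
    (h : ∀ m, PowerSeries.coeff m p ∈ Ideal.span (v '' Set.Iio k)) :
    p ∈ Ideal.span ((fun i => PowerSeries.C (R := R) (v i)) '' Set.Iio k) := by
  have h' : ∀ m, ∃ c : Fin k → R, ∑ i, c i * v i = PowerSeries.coeff m p := by
    intro m
    have := h m
    rw [← aux_range_fin k v, Ideal.mem_span_range_iff_exists_fun] at this
    exact this
  choose c hc using h'
  have hp : p = ∑ i : Fin k, PowerSeries.mk (fun m => c m i) * PowerSeries.C (R := R) (v i) := by
    ext m
    rw [map_sum]
    simp only [PowerSeries.coeff_mul_C, PowerSeries.coeff_mk]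
    exact (hc m).symm
  rw [hp]
  exact Ideal.sum_mem _ fun i _ => Ideal.mul_mem_left _ _
    (Ideal.subset_span ⟨(i : ℕ), i.2, rfl⟩)

lemma aux_map_eq_zero_iff {I : Ideal R} (p : PowerSeries R) :
    PowerSeries.map (Ideal.Quotient.mk I) p = 0 ↔
      ∀ m, PowerSeries.coeff m p ∈ I := by
  constructor
  · intro h m
    have := congrArg (PowerSeries.coeff m) h
    rw [PowerSeries.coeff_map, map_zero] at this
    exact (Ideal.Quotient.eq_zero_iff_mem).1 this
  · intro h
    ext m
    rw [PowerSeries.coeff_map, map_zero]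
    exact (Ideal.Quotient.eq_zero_iff_mem).2 (h m)

lemma aux_C_nzd {a : R} (ha : a ∈ nonZeroDivisors R) :
    PowerSeries.C (R := R) a ∈ nonZeroDivisors (PowerSeries R) := by
  rw [mem_nonZeroDivisors_iff_right]
  intro p hp
  ext m
  have := congrArg (PowerSeries.coeff m) hp
  rw [PowerSeries.coeff_mul_C, map_zero] at this
  rw [map_zero]
  exact mem_nonZeroDivisors_iff_right.1 ha _ this

end Aux

/-- If `(v₀, …, v_n)` is a regular sequence on `R` and the image of `f` in each
`(R/(v₀,…,v_k))[[w]]` is a nonzerodivisor, then `(v₀, …, v_n)` is a regular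
sequence on `R[[w]]/(f)`. -/
theorem regular_sequence_on_powerSeries_quotient
    {R : Type*} [CommRing R] (n : ℕ) (v : ℕ → R) (f : PowerSeries R)
    (hreg : ∀ k ≤ n, Ideal.Quotient.mk (Ideal.span (v '' Set.Iio k)) (v k) ∈
      nonZeroDivisors (R ⧸ Ideal.span (v '' Set.Iio k)))
    (hf : ∀ k ≤ n, PowerSeries.map (Ideal.Quotient.mk (Ideal.span (v '' Set.Iio (k + 1)))) f ∈
      nonZeroDivisors (PowerSeries (R ⧸ Ideal.span (v '' Set.Iio (k + 1))))) :
    ∀ k ≤ n, Function.Injective fun y :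
        PowerSeries R ⧸ Ideal.span (insert f ((fun i => PowerSeries.C (R := R) (v i)) '' Set.Iio k)) =>
      Ideal.Quotient.mk (Ideal.span (insert f ((fun i => PowerSeries.C (R := R) (v i)) '' Set.Iio k)))
        (PowerSeries.C (R := R) (v k)) * y := by
  intro k hk
  set Ik : Ideal R := Ideal.span (v '' Set.Iio k) with hIk_def
  set Ik1 : Ideal R := Ideal.span (v '' Set.Iio (k + 1)) with hIk1_def
  set J : Ideal (PowerSeries R) :=
    Ideal.span (insert f ((fun i => PowerSeries.C (R := R) (v i)) '' Set.Iio k)) with hJ_def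
  -- generators map to zero
  have hker : ∀ (I : Ideal R), (∀ i, i < k → v i ∈ I) →
      ∀ p ∈ Ideal.span ((fun i => PowerSeries.C (R := R) (v i)) '' Set.Iio k),
      PowerSeries.map (Ideal.Quotient.mk I) p = 0 := by
    intro I hI p hp
    have hle : Ideal.span ((fun i => PowerSeries.C (R := R) (v i)) '' Set.Iio k) ≤
        RingHom.ker (PowerSeries.map (Ideal.Quotient.mk I)) := by
      rw [Ideal.span_le]
      rintro _ ⟨i, hi, rfl⟩
      simp only [SetLike.mem_coe, RingHom.mem_ker, PowerSeries.map_C]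
      rw [Ideal.Quotient.eq_zero_iff_mem.2 (hI i hi), map_zero]
    exact hle hp
  -- the key step: multiplication by C (v k) on R⟦X⟧/J is "injective"
  have key : ∀ y : PowerSeries R, PowerSeries.C (R := R) (v k) * y ∈ J → y ∈ J := by
    intro y hy
    rw [hJ_def, Ideal.mem_span_insert] at hy
    obtain ⟨z, m, hm, heq⟩ := hy
    -- reduce mod I_{k+1} to see that all the coefficients of z lie in I_{k+1}
    have hvk1 : v k ∈ Ik1 := Ideal.subset_span ⟨k, Nat.lt_succ_self k, rfl⟩
    have hzmap : PowerSeries.map (Ideal.Quotient.mk Ik1) z = 0 := by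
      have h1 := congrArg (PowerSeries.map (Ideal.Quotient.mk Ik1)) heq
      rw [map_mul, map_add, map_mul, PowerSeries.map_C,
        Ideal.Quotient.eq_zero_iff_mem.2 hvk1, map_zero, zero_mul,
        hker Ik1 (fun i hi => Ideal.subset_span ⟨i, Nat.lt_succ_of_lt hi, rfl⟩) m hm,
        add_zero] at h1
      exact mem_nonZeroDivisors_iff_right.1 (hf k hk) _ h1.symm
    have hz : ∀ mm, PowerSeries.coeff mm z ∈ Ik1 := (aux_map_eq_zero_iff z).1 hzmap
    -- decompose each coefficient of z as a * v k + (element of I_k)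
    have hins : v '' Set.Iio (k + 1) = insert (v k) (v '' Set.Iio k) := by
      have : Set.Iio (k + 1) = insert k (Set.Iio k) := by
        ext i; simp only [Set.mem_Iio, Set.mem_insert_iff]; omega
      rw [this, Set.image_insert_eq]
    have hz' : ∀ mm, ∃ a, ∃ r ∈ Ik, PowerSeries.coeff mm z = a * v k + r := by
      intro mm
      have := hz mm
      rw [hIk1_def, hins, Ideal.mem_span_insert] at this
      exact this
    choose a r hr hzr using hz'
    set h : PowerSeries R := PowerSeries.mk a with hh
    set m' : PowerSeries R := PowerSeries.mk r with hm'
    have hz_decomp : z = PowerSeries.C (R := R) (v k) * h + m' := by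
      ext mm
      rw [map_add, mul_comm (PowerSeries.C (R := R) (v k)) h, PowerSeries.coeff_mul_C]
      simp only [hh, hm', PowerSeries.coeff_mk]
      exact hzr mm
    -- the main identity
    have heq2 : PowerSeries.C (R := R) (v k) * (y - h * f) = m' * f + m := by
      rw [hz_decomp] at heq
      linear_combination heq
    -- reduce mod I_k
    have hm'map : PowerSeries.map (Ideal.Quotient.mk Ik) m' = 0 :=
      (aux_map_eq_zero_iff m').2 fun mm => by
        simpa only [hm', PowerSeries.coeff_mk] using hr mm
    have h2 := congrArg (PowerSeries.map (Ideal.Quotient.mk Ik)) heq2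
    rw [map_mul, map_add, map_mul, hm'map, zero_mul, PowerSeries.map_C,
      hker Ik (fun i hi => Ideal.subset_span ⟨i, hi, rfl⟩) m hm, add_zero] at h2
    have h3 : PowerSeries.map (Ideal.Quotient.mk Ik) (y - h * f) = 0 := by
      have hC := aux_C_nzd (hreg k hk)
      refine mem_nonZeroDivisors_iff_right.1 hC _ ?_
      rw [mul_comm]; exact h2
    have h4 : y - h * f ∈ Ideal.span ((fun i => PowerSeries.C (R := R) (v i)) '' Set.Iio k) :=
      aux_mem_span_C k v _ ((aux_map_eq_zero_iff _).1 h3)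
    have h5 : y - h * f ∈ J :=
      Ideal.span_mono (Set.subset_insert _ _) h4
    have h6 : h * f ∈ J :=
      Ideal.mul_mem_left _ _ (Ideal.subset_span (Set.mem_insert _ _))
    have := Ideal.add_mem _ h5 h6
    simpa using this
  -- deduce injectivity
  intro A B hAB
  obtain ⟨a, rfl⟩ := Ideal.Quotient.mk_surjective A
  obtain ⟨b, rfl⟩ := Ideal.Quotient.mk_surjective B
  simp only at hAB
  rw [← map_mul, ← map_mul, Ideal.Quotient.eq] at hAB
  rw [Ideal.Quotient.eq]
  exact key (a - b) (by rwa [mul_sub])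
end

section
/- Let S be a commutative ring in which 2 is a nonzerodivisor, let ū ∈ S[[u]] be a power series with zero constant term satisfying ū ≡ −u mod (u²), and let σ : S[[u]] → S[[u]] be the S-algebra endomorphism given by substituting u ↦ ū; assume σ is an involution, i.e. σ(ū) = u. Assume further that there exists a ∈ S whose image in S/2S is a nonzerodivisor and such that ū ≡ u + a·u² modulo the ideal of S[[u]] generated by 2 and u³. Then every f ∈ S[[u]] with σ(f) = −f can be written as f = g − σ(g) for some g ∈ S[[u]]; that is, the set {f ∈ S[[u]] : σ(f) = −f} equals {g − σ(g) : g ∈ S[[u]]}. -/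
open PowerSeries

namespace Aux
variable {S : Type*} [CommRing S]

theorem coeff_substInto (w f : PowerSeries S) (n : ℕ) :
    coeff n (w.substInto f) =
      ∑ k ∈ Finset.range (n + 1), coeff k f * coeff n (w ^ k) := by
  simp [PowerSeries.substInto]

theorem coeff_pow_eq_zero {w : PowerSeries S} (hw : constantCoeff w = 0)
    {n k : ℕ} (h : n < k) : coeff n (w ^ k) = 0 := by
  have : (X : PowerSeries S) ^ k ∣ w ^ k := pow_dvd_pow_of_dvd (X_dvd_iff.2 hw) k
  exact (X_pow_dvd_iff.1 this) n h

/-- coeff of eval₂ of a polynomial. -/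
theorem coeff_eval₂ {w : PowerSeries S} (hw : constantCoeff w = 0)
    (p : Polynomial S) (n : ℕ) :
    coeff n (p.eval₂ (C) w) =
      ∑ k ∈ Finset.range (n + 1), p.coeff k * coeff n (w ^ k) := by
  rw [Polynomial.eval₂_eq_sum, Polynomial.sum, map_sum]
  have h1 : ∀ k ∈ p.support, coeff n (C (p.coeff k) * w ^ k)
      = p.coeff k * coeff n (w ^ k) := fun k _ => by rw [coeff_C_mul]
  rw [Finset.sum_congr rfl h1]
  refine Eq.trans (Finset.sum_subset (Finset.subset_union_left (s₁ := p.support)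
    (s₂ := Finset.range (n+1))) (fun k _ hk => by
      rw [Polynomial.notMem_support_iff.1 hk, zero_mul]))
    (Finset.sum_subset (Finset.subset_union_right (s₁ := p.support)
    (s₂ := Finset.range (n+1))) (fun k _ hk => by
      rw [coeff_pow_eq_zero hw (by simpa using hk), mul_zero])).symm

theorem coeff_substInto_trunc {w : PowerSeries S} (hw : constantCoeff w = 0)
    (f : PowerSeries S) {n m : ℕ} (h : n < m) :
    coeff n (w.substInto f) = coeff n ((trunc m f).eval₂ (C) w) := by
  rw [coeff_substInto, coeff_eval₂ hw]
  refine Finset.sum_congr rfl fun k hk => ?_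
  rw [coeff_trunc]
  rw [if_pos (lt_of_lt_of_le (Finset.mem_range.1 hk) h)]

theorem substInto_add (w f g : PowerSeries S) :
    w.substInto (f + g) = w.substInto f + w.substInto g := by
  ext n; simp [coeff_substInto, add_mul, Finset.sum_add_distrib]

theorem substInto_C (w : PowerSeries S) (c : S) :
    w.substInto (C c) = C c := by
  ext n
  rw [coeff_substInto]
  rcases Nat.eq_zero_or_pos n with rfl | hn
  · simp
  · rw [Finset.sum_eq_zero, coeff_C, if_neg hn.ne']
    intro k hk
    rcases Nat.eq_zero_or_pos k with rfl | hk0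
    · simp [coeff_one, hn.ne']
    · simp [coeff_C, hk0.ne']

theorem substInto_one (w : PowerSeries S) : w.substInto 1 = 1 := by
  simpa using substInto_C w 1

theorem substInto_mul {w : PowerSeries S} (hw : constantCoeff w = 0)
    (f g : PowerSeries S) :
    w.substInto (f * g) = w.substInto f * w.substInto g := by
  ext n
  rw [coeff_substInto, coeff_mul]
  have key : ∀ k ∈ Finset.range (n+1), coeff k (f * g) * coeff n (w ^ k)
      = (trunc (n+1) f * trunc (n+1) g).coeff k * coeff n (w ^ k) := by
    intro k hk
    rw [Finset.mem_range] at hk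
    congr 1
    rw [coeff_mul, Polynomial.coeff_mul]
    refine Finset.sum_congr rfl fun p hp => ?_
    rw [Finset.HasAntidiagonal.mem_antidiagonal] at hp
    rw [coeff_trunc, coeff_trunc, if_pos (by omega : p.1 < n+1),
      if_pos (by omega : p.2 < n+1)]
  rw [Finset.sum_congr rfl key, ← coeff_eval₂ hw, Polynomial.eval₂_mul, coeff_mul]
  refine Finset.sum_congr rfl fun p hp => ?_
  rw [Finset.HasAntidiagonal.mem_antidiagonal] at hp
  rw [coeff_substInto_trunc hw f (by omega : p.1 < n+1),
    coeff_substInto_trunc hw g (by omega : p.2 < n+1)]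

/-- `substInto w` as a ring hom. -/
noncomputable def substHom (w : PowerSeries S) (hw : constantCoeff w = 0) :
    PowerSeries S →+* PowerSeries S where
  toFun f := w.substInto f
  map_one' := substInto_one w
  map_mul' := substInto_mul hw
  map_zero' := by ext n; simp [coeff_substInto]
  map_add' := substInto_add w

theorem substHom_apply {w : PowerSeries S} (hw : constantCoeff w = 0) (f : PowerSeries S) :
    substHom w hw f = w.substInto f := rfl

theorem substInto_X_right (f : PowerSeries S) : (X : PowerSeries S).substInto f = f := by
  ext n
  rw [coeff_substInto, Finset.sum_eq_single n]
  · simp [coeff_X_pow]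
  · intro k hk hkn
    rw [coeff_X_pow, if_neg (by exact fun h => hkn h.symm), mul_zero]
  · intro h; exact absurd (Finset.self_mem_range_succ n) h

theorem substInto_X {w : PowerSeries S} (hw : constantCoeff w = 0) :
    w.substInto X = w := by
  ext n
  rw [coeff_substInto]
  rcases Nat.eq_zero_or_pos n with rfl | hn
  · simpa using hw.symm
  · rw [Finset.sum_eq_single 1]
    · simp
    · intro k hk hk1
      rcases Nat.eq_zero_or_pos k with rfl | hk0
      · simp
      · rw [coeff_X, if_neg (by omega), zero_mul]
    · intro h; exact absurd (Finset.mem_range.2 (by omega)) h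

theorem constantCoeff_substInto {w f : PowerSeries S} (hf : constantCoeff f = 0) :
    constantCoeff (w.substInto f) = 0 := by
  rw [← coeff_zero_eq_constantCoeff_apply, coeff_substInto]
  simp [coeff_zero_eq_constantCoeff_apply, hf]

/-- dependence of a coefficient of `substInto` only on low coefficients -/
theorem coeff_substInto_congr {w f g : PowerSeries S} {n : ℕ}
    (h : ∀ k ≤ n, coeff k f = coeff k g) :
    coeff n (w.substInto f) = coeff n (w.substInto g) := by
  rw [coeff_substInto, coeff_substInto]
  exact Finset.sum_congr rfl fun k hk => by
    rw [h k (Nat.lt_succ_iff.1 (Finset.mem_range.1 hk))]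

theorem substInto_comp {v w : PowerSeries S}
    (hv : constantCoeff v = 0) (hw : constantCoeff w = 0) (f : PowerSeries S) :
    v.substInto (w.substInto f) = (v.substInto w).substInto f := by
  ext n
  set q := trunc (n + 1) f with hq
  have h1 : coeff n (v.substInto (w.substInto f))
      = coeff n (v.substInto (q.eval₂ (C) w)) := by
    refine coeff_substInto_congr fun k hk => ?_
    exact coeff_substInto_trunc hw f (by omega)
  have h2 : v.substInto (q.eval₂ (C) w) = q.eval₂ (C) (v.substInto w) := by
    have := Polynomial.hom_eval₂ q (C) (substHom v hv) w
    have hcomp : (substHom v hv).comp (C) = C :=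
      RingHom.ext fun c => by rw [RingHom.comp_apply, substHom_apply]; exact substInto_C v c
    simpa [hcomp, substHom_apply] using this
  rw [h1, h2, coeff_substInto_trunc (f := f) (constantCoeff_substInto hw) (by omega : n < n+1)]


theorem coeff_pow_self {ubar t : PowerSeries S} (ht : ubar + X = X ^ 2 * t)
    (n : ℕ) : coeff n (ubar ^ n) = (-1) ^ n := by
  have hX : (X : PowerSeries S) ∣ ubar := ⟨-1 + X * t, by linear_combination ht⟩
  have claim : ∀ n : ℕ, (X : PowerSeries S) ^ (n + 1) ∣ ubar ^ n - (-X) ^ n := by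
    intro n
    induction n with
    | zero => simp
    | succ n ih =>
      have key : ubar ^ (n+1) - (-X) ^ (n+1)
          = (ubar ^ n - (-X) ^ n) * ubar + (-X) ^ n * (ubar + X) := by ring
      rw [key]
      refine dvd_add ?_ ?_
      · have := mul_dvd_mul ih hX
        rwa [← pow_succ] at this
      · rw [ht]
        exact ⟨(-1) ^ n * t, by ring⟩
  have h1 : coeff n (ubar ^ n - (-X) ^ n) = 0 :=
    X_pow_dvd_iff.1 (claim n) n (Nat.lt_succ_self n)
  rw [map_sub, sub_eq_zero] at h1
  have h2 : ((-X : PowerSeries S)) ^ n = C ((-1) ^ n) * X ^ n := by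
    rw [neg_pow, map_pow, map_neg, map_one]
  rw [h1, h2, coeff_C_mul, coeff_X_pow, if_pos rfl, mul_one]


theorem pow_mod_two {R : Type*} [CommRing R] {ub : PowerSeries R} {ab : R} {d : PowerSeries R}
    (hd : ub = X + C ab * X ^ 2 + X ^ 3 * d) (n : ℕ) :
    ∃ r : PowerSeries R, ub ^ n = X ^ n + C ((n : R) * ab) * X ^ (n + 1) + X ^ (n + 2) * r := by
  induction n with
  | zero => exact ⟨0, by simp⟩
  | succ n ih =>
    obtain ⟨r, hr⟩ := ih
    refine ⟨d + C ((n : R) * ab) * C ab + X * (C ((n : R) * ab) * d) + r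
      + X * (r * C ab) + X ^ 2 * (r * d), ?_⟩
    have hC : C (((n + 1 : ℕ) : R) * ab) = C ((n : R) * ab) + C ab := by
      push_cast
      rw [add_mul, one_mul, map_add]
    rw [pow_succ, hr, hC]
    rw [hd]
    ring

theorem coeff_pow_mod_two {R : Type*} [CommRing R] (h2 : (2 : R) = 0)
    {ub : PowerSeries R} {ab : R} {d : PowerSeries R}
    (hd : ub = X + C ab * X ^ 2 + X ^ 3 * d) {n : ℕ} (hn : Odd n) :
    coeff (n + 1) (ub ^ n) = ab := by
  obtain ⟨r, hr⟩ := pow_mod_two hd n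
  have hz : coeff (n + 1) (X ^ (n + 2) * r) = 0 :=
    X_pow_dvd_iff.1 ⟨r, rfl⟩ _ (by omega)
  rw [hr, map_add, map_add, coeff_X_pow, if_neg (by omega), coeff_C_mul, coeff_X_pow,
    if_pos rfl, mul_one, hz, add_zero, zero_add]
  obtain ⟨m, hm⟩ := hn
  subst hm
  push_cast
  rw [h2]
  ring

theorem two_pow_series_eq {R : Type*} [CommRing R] :
    (2 : PowerSeries R) = C (2 : R) := by
  rw [map_ofNat]

theorem map_ubar {S : Type*} [CommRing S] {ubar : PowerSeries S} {a : S}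
    (hcong2 : ubar - (PowerSeries.X + PowerSeries.C a * PowerSeries.X ^ 2) ∈
      Ideal.span {(2 : PowerSeries S), PowerSeries.X ^ 3}) :
    ∃ d : PowerSeries (S ⧸ Ideal.span {(2 : S)}),
      PowerSeries.map (Ideal.Quotient.mk (Ideal.span {(2 : S)})) ubar
        = X + C (Ideal.Quotient.mk (Ideal.span {(2 : S)}) a) * X ^ 2 + X ^ 3 * d := by
  set R := S ⧸ Ideal.span {(2 : S)}
  set π := Ideal.Quotient.mk (Ideal.span {(2 : S)})
  have h2R : (2 : R) = 0 := by
    have : π (2 : S) = 0 := Ideal.Quotient.eq_zero_iff_mem.2 (Ideal.mem_span_singleton_self 2)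
    rwa [map_ofNat] at this
  obtain ⟨c, d, hcd⟩ := Ideal.mem_span_pair.1 hcong2
  refine ⟨PowerSeries.map π d, ?_⟩
  have h := congrArg (PowerSeries.map π) hcd
  simp only [map_add, map_mul, map_sub, PowerSeries.map_X, PowerSeries.map_C, map_pow,
    map_ofNat] at h
  have h2PS : (2 : PowerSeries R) = 0 := by rw [two_pow_series_eq, h2R, map_zero]
  rw [h2PS, mul_zero, zero_add] at h
  linear_combination -h

theorem h2R' {S : Type*} [CommRing S] : (2 : S ⧸ Ideal.span {(2 : S)}) = 0 := by
  have : Ideal.Quotient.mk (Ideal.span {(2 : S)}) (2 : S) = 0 :=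
    Ideal.Quotient.eq_zero_iff_mem.2 (Ideal.mem_span_singleton_self 2)
  rwa [map_ofNat] at this

theorem exists_half {S : Type*} [CommRing S] (h2 : (2 : S) ∈ nonZeroDivisors S)
    {ubar : PowerSeries S} {t : PowerSeries S} (ht : ubar + X = X ^ 2 * t)
    {a : S}
    (ha : Ideal.Quotient.mk (Ideal.span {(2 : S)}) a ∈ nonZeroDivisors (S ⧸ Ideal.span {(2 : S)}))
    (hcong2 : ubar - (PowerSeries.X + PowerSeries.C a * PowerSeries.X ^ 2) ∈
      Ideal.span {(2 : PowerSeries S), PowerSeries.X ^ 3})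
    {f : PowerSeries S} (hf : ubar.substInto f = -f) (n : ℕ)
    (hlow : ∀ k < n, coeff k f = 0) :
    ∃ s : S, coeff n f = 2 * s := by
  have hzero : ∑ k ∈ Finset.range n, coeff k f * coeff n (ubar ^ k) = 0 :=
    Finset.sum_eq_zero fun k hk => by rw [hlow k (Finset.mem_range.1 hk), zero_mul]
  rcases Nat.even_or_odd n with he | ho
  · -- even case: coeff n f = 0
    have h1 : coeff n (ubar.substInto f) = coeff n f := by
      rw [coeff_substInto, Finset.sum_range_succ, hzero, zero_add, coeff_pow_self ht,
        he.neg_one_pow, mul_one]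
    rw [hf, map_neg] at h1
    have h2f : coeff n f * 2 = 0 := by linear_combination - h1
    exact ⟨0, by rw [h2.2 _ h2f, mul_zero]⟩
  · -- odd case
    set π := Ideal.Quotient.mk (Ideal.span {(2 : S)})
    have hzero2 : ∑ k ∈ Finset.range n, coeff k f * coeff (n+1) (ubar ^ k) = 0 :=
      Finset.sum_eq_zero fun k hk => by rw [hlow k (Finset.mem_range.1 hk), zero_mul]
    have h1 : coeff (n+1) (ubar.substInto f)
        = coeff n f * coeff (n+1) (ubar ^ n) + coeff (n+1) f := by
      rw [coeff_substInto, Finset.sum_range_succ, Finset.sum_range_succ, hzero2, zero_add,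
        coeff_pow_self ht (n+1), ho.add_one.neg_one_pow, mul_one]
    rw [hf, map_neg] at h1
    have hkey : coeff n f * coeff (n+1) (ubar ^ n) = 2 * (- coeff (n+1) f) := by
      linear_combination - h1
    have hq : π (coeff n f) * π (coeff (n+1) (ubar ^ n)) = 0 := by
      have := congrArg π hkey
      rw [map_mul, map_mul] at this
      rw [this, map_ofNat, h2R', zero_mul]
    obtain ⟨d, hd⟩ := map_ubar hcong2
    have hπc : π (coeff (n+1) (ubar ^ n))
        = π a := by
      rw [← PowerSeries.coeff_map, map_pow]
      exact coeff_pow_mod_two h2R' hd ho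
    rw [hπc] at hq
    have h0q : π (coeff n f) = 0 := ha.2 _ hq
    rw [Ideal.Quotient.eq_zero_iff_mem, Ideal.mem_span_singleton] at h0q
    obtain ⟨s, hs⟩ := h0q
    exact ⟨s, hs⟩

section Construction
variable {S : Type*} [CommRing S]

theorem substInto_sub (w f g : PowerSeries S) :
    w.substInto (f - g) = w.substInto f - w.substInto g := by
  ext n; simp [coeff_substInto, sub_mul, Finset.sum_sub_distrib]

noncomputable def sCoef (n : ℕ) (F : PowerSeries S) : S :=
  @dite _ _ (Classical.dec _) (fun h : ∃ s : S, coeff n F = 2 * s => h.choose) (fun _ => 0)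

theorem sCoef_spec {n : ℕ} {F : PowerSeries S} (h : ∃ s : S, coeff n F = 2 * s) :
    coeff n F = 2 * sCoef n F := by
  rw [sCoef]
  rw [dif_pos h]
  exact h.choose_spec

noncomputable def delta (ubar : PowerSeries S) (n : ℕ) (F : PowerSeries S) : PowerSeries S :=
  C (sCoef n F) * X ^ n - ubar.substInto (C (sCoef n F) * X ^ n)

noncomputable def seq (ubar f : PowerSeries S) : ℕ → PowerSeries S
  | 0 => f
  | n + 1 => seq ubar f n - delta ubar n (seq ubar f n)

theorem coeff_CXpow (s : S) (n k : ℕ) :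
    coeff k (C s * X ^ n) = if k = n then s else 0 := by
  rw [coeff_C_mul, coeff_X_pow]; split_ifs <;> simp

theorem coeff_delta_lt (ubar : PowerSeries S) (n : ℕ) (F : PowerSeries S) {k : ℕ} (hk : k < n) :
    coeff k (delta ubar n F) = 0 := by
  rw [delta, map_sub, coeff_CXpow, if_neg hk.ne, coeff_substInto, Finset.sum_eq_zero
    (fun j hj => by
      rw [coeff_CXpow, if_neg (by have := Finset.mem_range.1 hj; omega), zero_mul]),
    sub_zero]

theorem coeff_delta_self {ubar t : PowerSeries S} (ht : ubar + X = X ^ 2 * t)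
    (n : ℕ) (F : PowerSeries S) :
    coeff n (delta ubar n F) = sCoef n F - sCoef n F * (-1) ^ n := by
  rw [delta, map_sub, coeff_CXpow, if_pos rfl, coeff_substInto,
    Finset.sum_eq_single n
      (fun j hj hjn => by rw [coeff_CXpow, if_neg hjn, zero_mul])
      (fun h => absurd (Finset.self_mem_range_succ n) h),
    coeff_CXpow, if_pos rfl, coeff_pow_self ht]

theorem substInto_substInto {ubar : PowerSeries S} (h0 : constantCoeff ubar = 0)
    (hinv : ubar.substInto ubar = X) (g : PowerSeries S) :
    ubar.substInto (ubar.substInto g) = g := by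
  rw [substInto_comp h0 h0, hinv, substInto_X_right]

theorem delta_anti {ubar : PowerSeries S} (h0 : constantCoeff ubar = 0)
    (hinv : ubar.substInto ubar = X) (n : ℕ) (F : PowerSeries S) :
    ubar.substInto (delta ubar n F) = - delta ubar n F := by
  rw [delta, substInto_sub, substInto_substInto h0 hinv]
  ring

/-- even-degree lowest coefficient of an antisymmetric series vanishes -/
theorem coeff_even_zero (h2 : (2 : S) ∈ nonZeroDivisors S)
    {ubar t : PowerSeries S} (ht : ubar + X = X ^ 2 * t)
    {f : PowerSeries S} (hf : ubar.substInto f = -f) {n : ℕ}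
    (hlow : ∀ k < n, coeff k f = 0) (he : Even n) : coeff n f = 0 := by
  have hzero : ∑ k ∈ Finset.range n, coeff k f * coeff n (ubar ^ k) = 0 :=
    Finset.sum_eq_zero fun k hk => by rw [hlow k (Finset.mem_range.1 hk), zero_mul]
  have h1 : coeff n (ubar.substInto f) = coeff n f := by
    rw [coeff_substInto, Finset.sum_range_succ, hzero, zero_add, coeff_pow_self ht,
      he.neg_one_pow, mul_one]
  rw [hf, map_neg] at h1
  exact h2.2 _ (by linear_combination - h1)

theorem seq_invariant (h2 : (2 : S) ∈ nonZeroDivisors S)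
    {ubar : PowerSeries S} (h0 : constantCoeff ubar = 0)
    {t : PowerSeries S} (ht : ubar + X = X ^ 2 * t)
    (hinv : ubar.substInto ubar = X)
    {a : S}
    (ha : Ideal.Quotient.mk (Ideal.span {(2 : S)}) a ∈ nonZeroDivisors (S ⧸ Ideal.span {(2 : S)}))
    (hcong2 : ubar - (PowerSeries.X + PowerSeries.C a * PowerSeries.X ^ 2) ∈
      Ideal.span {(2 : PowerSeries S), PowerSeries.X ^ 3})
    {f : PowerSeries S} (hf : ubar.substInto f = -f) :
    ∀ n : ℕ, (ubar.substInto (seq ubar f n) = - seq ubar f n) ∧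
      ∀ k < n, coeff k (seq ubar f n) = 0 := by
  intro n
  induction n with
  | zero => exact ⟨hf, fun k hk => absurd hk (Nat.not_lt_zero k)⟩
  | succ n ih =>
    obtain ⟨hanti, hlow⟩ := ih
    have hex : ∃ s : S, coeff n (seq ubar f n) = 2 * s :=
      exists_half h2 ht ha hcong2 hanti n hlow
    refine ⟨?_, ?_⟩
    · show ubar.substInto (seq ubar f n - delta ubar n (seq ubar f n)) = _
      rw [substInto_sub, hanti, delta_anti h0 hinv]
      show _ = -(seq ubar f n - delta ubar n (seq ubar f n))
      ring
    · intro k hk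
      show coeff k (seq ubar f n - delta ubar n (seq ubar f n)) = 0
      rcases Nat.lt_or_ge k n with h | h
      · rw [map_sub, hlow k h, coeff_delta_lt ubar n _ h, sub_zero]
      · have hkn : k = n := by omega
        subst hkn
        rw [map_sub, coeff_delta_self ht]
        rcases Nat.even_or_odd k with he | ho
        · have h0n : coeff k (seq ubar f k) = 0 := coeff_even_zero h2 ht hanti hlow he
          have hs0 : sCoef k (seq ubar f k) = 0 := by
            refine h2.2 _ ?_
            have := sCoef_spec hex
            rw [h0n] at this
            linear_combination - this
          rw [h0n, hs0]; ring
        · rw [sCoef_spec hex, ho.neg_one_pow]; ring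

end Construction
end Aux

/-- Every `f` with `σ(f) = −f` is of the form `g − σ(g)`: the antifixed part
of the conjugation involution coincides with the image of `1 − σ`. -/
theorem antifixed_eq_image_one_sub_sigma
    {S : Type*} [CommRing S] (h2 : (2 : S) ∈ nonZeroDivisors S)
    (ubar : PowerSeries S) (h0 : PowerSeries.constantCoeff ubar = 0)
    (hcong : ubar + PowerSeries.X ∈ Ideal.span {(PowerSeries.X : PowerSeries S) ^ 2})
    (hinv : PowerSeries.substInto ubar ubar = PowerSeries.X)
    (a : S)
    (ha : Ideal.Quotient.mk (Ideal.span {(2 : S)}) a ∈ nonZeroDivisors (S ⧸ Ideal.span {(2 : S)}))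
    (hcong2 : ubar - (PowerSeries.X + PowerSeries.C a * PowerSeries.X ^ 2) ∈
      Ideal.span {(2 : PowerSeries S), PowerSeries.X ^ 3}) :
    {f : PowerSeries S | PowerSeries.substInto ubar f = -f} =
      {f : PowerSeries S | ∃ g : PowerSeries S, f = g - PowerSeries.substInto ubar g} := by
  obtain ⟨t, ht⟩ : ∃ t : PowerSeries S, ubar + X = X ^ 2 * t := Ideal.mem_span_singleton.1 hcong
  ext f
  simp only [Set.mem_setOf_eq]
  constructor
  · intro hf
    refine ⟨PowerSeries.mk (fun n => Aux.sCoef n (Aux.seq ubar f n)), ?_⟩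
    have hinvr := Aux.seq_invariant h2 h0 ht hinv ha hcong2 hf
    have hseq_eq : ∀ m, Aux.seq ubar f m
        = f - ∑ n ∈ Finset.range m, Aux.delta ubar n (Aux.seq ubar f n) := by
      intro m
      induction m with
      | zero => simp [Aux.seq]
      | succ m ihm =>
        rw [Finset.sum_range_succ]
        show Aux.seq ubar f m - _ = _
        rw [ihm]
        ring
    have hdsum : ∀ m, (∑ n ∈ Finset.range m, Aux.delta ubar n (Aux.seq ubar f n))
        = (∑ n ∈ Finset.range m, C (Aux.sCoef n (Aux.seq ubar f n)) * X ^ n)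
          - ubar.substInto (∑ n ∈ Finset.range m, C (Aux.sCoef n (Aux.seq ubar f n)) * X ^ n) := by
      intro m
      have hms := map_sum (Aux.substHom ubar h0)
        (fun n => C (Aux.sCoef n (Aux.seq ubar f n)) * X ^ n) (Finset.range m)
      simp only [Aux.substHom_apply] at hms
      rw [hms, ← Finset.sum_sub_distrib]
      rfl
    have hcoeffG : ∀ k m, k < m →
        coeff k (∑ n ∈ Finset.range m, C (Aux.sCoef n (Aux.seq ubar f n)) * X ^ n)
          = Aux.sCoef k (Aux.seq ubar f k) := by
      intro k m hk
      rw [map_sum, Finset.sum_eq_single k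
        (fun j hj hjk => by rw [Aux.coeff_CXpow, if_neg (Ne.symm hjk)])
        (fun h => absurd (Finset.mem_range.2 hk) h), Aux.coeff_CXpow, if_pos rfl]
    ext m
    have h1 : coeff m (Aux.seq ubar f (m + 1)) = 0 := (hinvr (m + 1)).2 m (Nat.lt_succ_self m)
    have h2' : coeff m f = coeff m
        ((∑ n ∈ Finset.range (m + 1), C (Aux.sCoef n (Aux.seq ubar f n)) * X ^ n)
          - ubar.substInto (∑ n ∈ Finset.range (m + 1), C (Aux.sCoef n (Aux.seq ubar f n)) * X ^ n)) := by
      have heq := hseq_eq (m + 1)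
      rw [hdsum] at heq
      have := congrArg (coeff m) heq
      rw [h1, map_sub] at this
      linear_combination - this
    have h3 : coeff m (PowerSeries.mk (fun n => Aux.sCoef n (Aux.seq ubar f n)))
        = coeff m (∑ n ∈ Finset.range (m + 1), C (Aux.sCoef n (Aux.seq ubar f n)) * X ^ n) := by
      rw [hcoeffG m (m + 1) (Nat.lt_succ_self m), coeff_mk]
    have h4 : coeff m (ubar.substInto (PowerSeries.mk (fun n => Aux.sCoef n (Aux.seq ubar f n))))
        = coeff m (ubar.substInto
            (∑ n ∈ Finset.range (m + 1), C (Aux.sCoef n (Aux.seq ubar f n)) * X ^ n)) :=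
      Aux.coeff_substInto_congr (fun k hk => by rw [coeff_mk, hcoeffG k (m + 1) (by omega)])
    rw [map_sub, h3, h4, ← map_sub, ← h2']
  · rintro ⟨g, rfl⟩
    rw [Aux.substInto_sub, Aux.substInto_substInto h0 hinv]
    ring
end

section
/- Let S be a commutative ring in which 2 is a nonzerodivisor, let ū ∈ S[[u]] be a power series with zero constant term satisfying ū ≡ −u mod (u²), and let σ : S[[u]] → S[[u]] be the S-algebra endomorphism given by substituting u ↦ ū; assume σ is an involution, i.e. σ(ū) = u. Let ξ ∈ S[[t]] be the unique power series with ξ(u·ū) = u + ū. Suppose I ⊆ S is an ideal with 2 ∈ I, d ≥ 1, and b ∈ S are such that ū ≡ u + b·u^{2d} modulo the ideal of S[[u]] generated by the image of I and u^{2d+1}. Then ξ ≡ b·t^{d} modulo the ideal of S[[t]] generated by the image of I and t^{d+1}. -/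
open PowerSeries

section Aux
variable {S : Type*} [CommRing S]

lemma coeff_substInto (w f : PowerSeries S) (n : ℕ) :
    coeff n (PowerSeries.substInto w f) =
      ∑ k ∈ Finset.range (n + 1), coeff k f * coeff n (w ^ k) := by
  simp [PowerSeries.substInto]

lemma map_substInto {R : Type*} [CommRing R] (π : S →+* R) (w f : PowerSeries S) :
    PowerSeries.map π (PowerSeries.substInto w f) =
      PowerSeries.substInto (PowerSeries.map π w) (PowerSeries.map π f) := by
  ext n
  simp [coeff_substInto, PowerSeries.coeff_map, ← map_pow, map_sum]

lemma mem_sup_iff (I : Ideal S) (n : ℕ) (f : PowerSeries S) :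
    f ∈ Ideal.span {(X : PowerSeries S) ^ n} ⊔ Ideal.map (C) I ↔
      (X : PowerSeries (S ⧸ I)) ^ n ∣ PowerSeries.map (Ideal.Quotient.mk I) f := by
  constructor
  · intro h
    obtain ⟨p, hp, q, hq, rfl⟩ := Submodule.mem_sup.mp h
    obtain ⟨c, rfl⟩ := Ideal.mem_span_singleton.mp hp
    have hq0 : PowerSeries.map (Ideal.Quotient.mk I) q = 0 := by
      have hle : Ideal.map (C) I ≤
          RingHom.ker (PowerSeries.map (Ideal.Quotient.mk I)) := by
        rw [Ideal.map_le_iff_le_comap]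
        intro a ha
        simp [Ideal.mem_comap, RingHom.mem_ker, PowerSeries.map_C,
          Ideal.Quotient.eq_zero_iff_mem.mpr ha]
      simpa [RingHom.mem_ker] using hle hq
    rw [map_add, hq0, add_zero, map_mul, map_pow, PowerSeries.map_X]
    exact Dvd.intro _ rfl
  · intro hdvd
    have hcoeff : ∀ k < n, coeff k f ∈ I := by
      intro k hk
      have h0 := (PowerSeries.X_pow_dvd_iff.mp hdvd) k hk
      rw [PowerSeries.coeff_map] at h0
      exact Ideal.Quotient.eq_zero_iff_mem.mp h0
    set T : PowerSeries S := ∑ k ∈ Finset.range n, C (coeff k f) * X ^ k with hT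
    have hTmem : T ∈ Ideal.map (C) I := by
      refine Ideal.sum_mem _ fun k hk => ?_
      exact Ideal.mul_mem_right _ _
        (Ideal.mem_map_of_mem _ (hcoeff k (Finset.mem_range.mp hk)))
    have hcoeffT : ∀ k < n, coeff k T = coeff k f := by
      intro k hk
      rw [hT, map_sum]
      simp only [coeff_C_mul, coeff_X_pow]
      rw [Finset.sum_eq_single k]
      · simp
      · intro j _ hj
        simp [Ne.symm hj]
      · intro hkn
        exact absurd (Finset.mem_range.mpr hk) hkn
    have hfT : f - T ∈ Ideal.span {(X : PowerSeries S) ^ n} := by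
      rw [Ideal.mem_span_singleton, PowerSeries.X_pow_dvd_iff]
      intro m hm
      simp [hcoeffT m hm]
    have hsplit : f = (f - T) + T := by ring
    rw [hsplit]
    exact Submodule.add_mem_sup hfT hTmem

end Aux

/-- If `ū ≡ u + b·u^{2d} mod (I, u^{2d+1})` with `2 ∈ I`, then the power series
`ξ` with `ξ(u·ū) = u + ū` satisfies `ξ ≡ b·t^d mod (I, t^{d+1})`. -/
theorem xi_leading_term
    {S : Type*} [CommRing S] (h2 : (2 : S) ∈ nonZeroDivisors S)
    (ubar : PowerSeries S) (h0 : PowerSeries.constantCoeff ubar = 0)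
    (hcong : ubar + PowerSeries.X ∈ Ideal.span {(PowerSeries.X : PowerSeries S) ^ 2})
    (hinv : PowerSeries.substInto ubar ubar = PowerSeries.X)
    (ξ : PowerSeries S)
    (hξ : PowerSeries.substInto (PowerSeries.X * ubar) ξ = PowerSeries.X + ubar)
    (I : Ideal S) (h2I : (2 : S) ∈ I) (d : ℕ) (hd : 1 ≤ d) (b : S)
    (hcong2 : ubar - (PowerSeries.X + PowerSeries.C b * PowerSeries.X ^ (2 * d)) ∈
      Ideal.span {(PowerSeries.X : PowerSeries S) ^ (2 * d + 1)} ⊔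
        Ideal.map (PowerSeries.C) I) :
    ξ - PowerSeries.C b * PowerSeries.X ^ d ∈
      Ideal.span {(PowerSeries.X : PowerSeries S) ^ (d + 1)} ⊔
        Ideal.map (PowerSeries.C) I := by
  obtain ⟨e, rfl⟩ : ∃ e, d = e + 1 := ⟨d - 1, (Nat.succ_pred_eq_of_pos hd).symm⟩
  set π := Ideal.Quotient.mk I with hπ
  set v := PowerSeries.map π ubar with hv
  set η := PowerSeries.map π ξ with hη
  set b' := π b with hb'
  have h2R : (2 : S ⧸ I) = 0 := by
    have := Ideal.Quotient.eq_zero_iff_mem.mpr h2I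
    rwa [map_ofNat] at this
  have hdvd1 : (X : PowerSeries (S ⧸ I)) ^ (2 * (e + 1) + 1) ∣
      (v - (X + C b' * X ^ (2 * (e + 1)))) := by
    have h := (mem_sup_iff I (2 * (e + 1) + 1) _).mp hcong2
    simpa [map_sub, map_add, map_mul, map_pow, PowerSeries.map_X, PowerSeries.map_C] using h
  obtain ⟨g, hg⟩ := hdvd1
  have hv_eq : v = X + C b' * X ^ (2 * (e + 1)) + X ^ (2 * (e + 1) + 1) * g := by
    linear_combination hg
  have hsub : PowerSeries.substInto (X * v) η = X + v := by
    have h := congrArg (PowerSeries.map π) hξ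
    rw [map_substInto] at h
    simpa [map_mul, PowerSeries.map_X, map_add] using h
  have hX2 : (X : PowerSeries (S ⧸ I)) + X = 0 := by
    rw [← two_mul, show ((2 : PowerSeries (S ⧸ I))) = C 2 from (map_ofNat _ 2).symm,
      h2R, map_zero, zero_mul]
  have hA : X * v = X ^ 2 * (1 + X ^ (2 * e + 1) * (C b' + X * g)) := by
    rw [hv_eq]; ring
  have key : ∀ k ≤ e + 1, coeff k η = if k = e + 1 then b' else 0 := by
    intro k hk
    have hApow : ∀ j, coeff (2 * k) ((X * v) ^ j) =
        coeff (2 * k) ((X : PowerSeries (S ⧸ I)) ^ (2 * j)) := by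
      intro j
      rcases Nat.eq_zero_or_pos j with hj | hj
      · subst hj; simp
      · set c : PowerSeries (S ⧸ I) := X ^ (2 * e + 1) * (C b' + X * g) with hc
        obtain ⟨s, hs⟩ : c ∣ (1 + c) ^ j - 1 := by
          have h := sub_dvd_pow_sub_pow (1 + c) 1 j
          simpa using h
        have hdvd2 : (X : PowerSeries (S ⧸ I)) ^ (2 * j + (2 * e + 1)) ∣
            (X * v) ^ j - X ^ (2 * j) := by
          refine ⟨(C b' + X * g) * s, ?_⟩
          rw [hA, mul_pow, ← pow_mul]
          calc (X ^ (2 * j) : PowerSeries (S ⧸ I)) * (1 + c) ^ j - X ^ (2 * j)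
              = X ^ (2 * j) * ((1 + c) ^ j - 1) := by ring
            _ = X ^ (2 * j) * (c * s) := by rw [hs]
            _ = X ^ (2 * j + (2 * e + 1)) * ((C b' + X * g) * s) := by
                rw [hc]; ring
        have hz : coeff (2 * k) ((X * v) ^ j - X ^ (2 * j)) = 0 :=
          PowerSeries.X_pow_dvd_iff.mp hdvd2 (2 * k) (by omega)
        rw [map_sub, sub_eq_zero] at hz
        exact hz
    have h1 : coeff (2 * k) (PowerSeries.substInto (X * v) η) =
        coeff k η := by
      rw [coeff_substInto]
      simp only [hApow, coeff_X_pow]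
      rw [Finset.sum_eq_single k]
      · simp
      · intro j _ hjk
        have hne : ¬ (2 * k = 2 * j) := by omega
        simp [hne]
      · intro hkn
        exact absurd (Finset.mem_range.mpr (by omega)) hkn
    have h2' : coeff (2 * k) (X + v) = if k = e + 1 then b' else 0 := by
      have hXv : X + v = C b' * X ^ (2 * (e + 1)) + X ^ (2 * (e + 1) + 1) * g := by
        rw [hv_eq]; linear_combination hX2
      rw [hXv, map_add, coeff_C_mul, coeff_X_pow]
      have hz2 : coeff (2 * k) (X ^ (2 * (e + 1) + 1) * g) = 0 :=
        PowerSeries.X_pow_dvd_iff.mp (dvd_mul_right _ _) _ (by omega)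
      rw [hz2, add_zero]
      by_cases hke : k = e + 1
      · have : 2 * k = 2 * (e + 1) := by omega
        simp [hke, this]
      · have hne : ¬ (2 * k = 2 * (e + 1)) := by omega
        simp [hne, hke]
    rw [← h1, hsub, h2']
  refine (mem_sup_iff I (e + 1 + 1) _).mpr ?_
  have hmap : PowerSeries.map π (ξ - C b * X ^ (e + 1)) =
      η - C b' * X ^ (e + 1) := by
    simp [map_sub, map_mul, map_pow, PowerSeries.map_X, PowerSeries.map_C, hη, hb']
  rw [hmap, PowerSeries.X_pow_dvd_iff]
  intro m hm
  rw [map_sub, coeff_C_mul, coeff_X_pow, key m (by omega)]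
  by_cases hme : m = e + 1
  · simp [hme]
  · simp [hme]
end
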